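/- arXiv:1405.7480 — 5 statements merged into one kernel-verified Lean document; each statement's English description precedes it below -/
import Mathlib

section
/- Let f : I → ℝ be three times differentiable on the interior of the interval I, let a, b be in the interior with a < b, and suppose f''' is integrable on [a,b]. Then (1/(b-a))·∫_a^b f(x) dx − f((a+b)/2) − ((b-a)²/24)·f''((a+b)/2) = ((b-a)³/96)·[∫_0^1 t³ f'''((t/2)a + ((2−t)/2)b) dt − ∫_0^1 t³ f'''(((2−t)/2)a + (t/2)b) dt]. -/
open MeasureTheory intervalIntegral

/-- Third-order Taylor expansion with integral remainder, bare-hands version. -/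
theorem taylor3_aux (F f f' f'' f''' : ℝ → ℝ) (m x : ℝ)
    (hF : ∀ s ∈ Set.uIcc m x, HasDerivAt F (f s) s)
    (h1 : ∀ s ∈ Set.uIcc m x, HasDerivAt f (f' s) s)
    (h2 : ∀ s ∈ Set.uIcc m x, HasDerivAt f' (f'' s) s)
    (h3 : ∀ s ∈ Set.uIcc m x, HasDerivAt f'' (f''' s) s)
    (hint : IntervalIntegrable (fun s => (x - s) ^ 3 / 6 * f''' s) volume m x) :
    F x = F m + f m * (x - m) + f' m * ((x - m) ^ 2 / 2) + f'' m * ((x - m) ^ 3 / 6)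
      + ∫ s in m..x, (x - s) ^ 3 / 6 * f''' s := by
  set g : ℝ → ℝ := fun s => F s + f s * (x - s) + f' s * ((x - s) ^ 2 / 2)
      + f'' s * ((x - s) ^ 3 / 6) with hg_def
  have hg : ∀ s ∈ Set.uIcc m x, HasDerivAt g ((x - s) ^ 3 / 6 * f''' s) s := by
    intro s hs
    have hlin : HasDerivAt (fun y : ℝ => x - y) (-1) s := by
      simpa using (hasDerivAt_id s).const_sub x
    have hd := (((hF s hs).add ((h1 s hs).mul hlin)).add
          ((h2 s hs).mul (((hlin.pow 2).div_const 2)))).add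
          ((h3 s hs).mul (((hlin.pow 3).div_const 6)))
    refine hd.congr_deriv ?_
    push_cast [Pi.pow_apply]
    ring
  have key := intervalIntegral.integral_eq_sub_of_hasDerivAt hg hint
  have hgx : g x = F x := by simp [hg_def]
  have hgm : g m = F m + f m * (x - m) + f' m * ((x - m) ^ 2 / 2) + f'' m * ((x - m) ^ 3 / 6) := rfl
  rw [key, hgx, hgm]; ring

theorem lemma_midpoint_identity
    (I : Set ℝ) (hI : I.OrdConnected)
    (f f' f'' f''' : ℝ → ℝ)
    (a b : ℝ) (ha : a ∈ interior I) (hb : b ∈ interior I) (hab : a < b)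
    (hf' : ∀ x ∈ interior I, HasDerivAt f (f' x) x)
    (hf'' : ∀ x ∈ interior I, HasDerivAt f' (f'' x) x)
    (hf''' : ∀ x ∈ interior I, HasDerivAt f'' (f''' x) x)
    (hint : IntegrableOn f''' (Set.Icc a b)) :
    (1 / (b - a)) * ∫ x in a..b, f x - f ((a + b) / 2)
      - ((b - a) ^ 2 / 24) * f'' ((a + b) / 2)
    = ((b - a) ^ 3 / 96) *
        ((∫ t in (0:ℝ)..1, t ^ 3 * f''' ((t / 2) * a + ((2 - t) / 2) * b))
          - ∫ t in (0:ℝ)..1, t ^ 3 * f''' (((2 - t) / 2) * a + (t / 2) * b)) := by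
  have hba : b - a ≠ 0 := sub_ne_zero.2 hab.ne'
  set m : ℝ := (a + b) / 2 with hm
  have ham : a ≤ m := by rw [hm]; linarith
  have hmb : m ≤ b := by rw [hm]; linarith
  have hsub : Set.Icc a b ⊆ interior I := hI.interior.out ha hb
  have hmI : m ∈ Set.Icc a b := ⟨ham, hmb⟩
  have hsub1 : Set.uIcc m b ⊆ Set.Icc a b := by
    rw [Set.uIcc_of_le hmb]; exact Set.Icc_subset_Icc ham le_rfl
  have hsub2 : Set.uIcc m a ⊆ Set.Icc a b := by
    rw [Set.uIcc_of_ge ham]; exact Set.Icc_subset_Icc le_rfl hmb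
  have hcf : ContinuousOn f (interior I) := fun x hx => (hf' x hx).continuousAt.continuousWithinAt
  set F : ℝ → ℝ := fun x => ∫ t in m..x, f t with hF_def
  have hFderiv : ∀ s ∈ Set.Icc a b, HasDerivAt F (f s) s := by
    intro s hs
    refine intervalIntegral.integral_hasDerivAt_right ?_ ?_ ?_
    · exact (hcf.mono ((Set.ordConnected_Icc.uIcc_subset hmI hs).trans hsub)).intervalIntegrable
    · exact (hcf.stronglyMeasurableAtFilter isOpen_interior) s (hsub hs)
    · exact (hf' s (hsub hs)).continuousAt
  -- interval integrability of remainder integrands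
  have hint1 : IntervalIntegrable f''' volume m b := by
    rw [intervalIntegrable_iff']; exact hint.mono_set hsub1
  have hint2 : IntervalIntegrable f''' volume m a := by
    rw [intervalIntegrable_iff']; exact hint.mono_set hsub2
  have hintb : IntervalIntegrable (fun s => (b - s) ^ 3 / 6 * f''' s) volume m b :=
    hint1.continuousOn_mul (by fun_prop)
  have hinta : IntervalIntegrable (fun s => (a - s) ^ 3 / 6 * f''' s) volume m a :=
    hint2.continuousOn_mul (by fun_prop)
  -- Taylor expansions
  have TB := taylor3_aux F f f' f'' f''' m b (fun s hs => hFderiv s (hsub1 hs))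
    (fun s hs => hf' s (hsub (hsub1 hs))) (fun s hs => hf'' s (hsub (hsub1 hs)))
    (fun s hs => hf''' s (hsub (hsub1 hs))) hintb
  have TA := taylor3_aux F f f' f'' f''' m a (fun s hs => hFderiv s (hsub2 hs))
    (fun s hs => hf' s (hsub (hsub2 hs))) (fun s hs => hf'' s (hsub (hsub2 hs)))
    (fun s hs => hf''' s (hsub (hsub2 hs))) hinta
  have hFm : F m = 0 := intervalIntegral.integral_same
  -- ∫_a^b f = F b - F a
  have hfi1 : IntervalIntegrable f volume a m := by
    refine (hcf.mono ?_).intervalIntegrable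
    rw [Set.uIcc_of_le ham]; exact (Set.Icc_subset_Icc le_rfl hmb).trans hsub
  have hfi2 : IntervalIntegrable f volume m b := by
    refine (hcf.mono ?_).intervalIntegrable
    rw [Set.uIcc_of_le hmb]; exact (Set.Icc_subset_Icc ham le_rfl).trans hsub
  have hsplit : (∫ x in a..b, f x) = F b - F a := by
    have h1 := intervalIntegral.integral_add_adjacent_intervals hfi1 hfi2
    have h2 : F a = -∫ x in a..m, f x := intervalIntegral.integral_symm a m
    rw [← h1, h2]; ring
  -- substitutions
  set J1 : ℝ := ∫ s in m..b, (b - s) ^ 3 / 6 * f''' s with hJ1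
  set J2 : ℝ := ∫ s in m..a, (a - s) ^ 3 / 6 * f''' s with hJ2
  have S1 : (∫ t in (0:ℝ)..1, t ^ 3 * f''' ((t / 2) * a + ((2 - t) / 2) * b))
      = 96 / (b - a) ^ 4 * J1 := by
    have heq : ∀ t : ℝ, t ^ 3 * f''' ((t / 2) * a + ((2 - t) / 2) * b)
        = (fun u => (2 / (b - a)) ^ 3 * 6 * ((b - u) ^ 3 / 6 * f''' u)) ((a - b) / 2 * t + b) := by
      intro t
      dsimp only
      have harg : (a - b) / 2 * t + b = (t / 2) * a + ((2 - t) / 2) * b := by ring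
      rw [harg]
      have h2 : (b - ((t / 2) * a + ((2 - t) / 2) * b)) = (b - a) / 2 * t := by ring
      rw [h2]
      field_simp
    simp only [heq]
    rw [intervalIntegral.integral_comp_mul_add
      (fun u => (2 / (b - a)) ^ 3 * 6 * ((b - u) ^ 3 / 6 * f''' u)) (by simpa using sub_ne_zero.2 hab.ne : (a - b) / 2 ≠ 0) b]
    have hend1 : (a - b) / 2 * 0 + b = b := by ring
    have hend2 : (a - b) / 2 * 1 + b = m := by rw [hm]; ring
    rw [hend1, hend2, intervalIntegral.integral_symm,
      intervalIntegral.integral_const_mul, smul_eq_mul, ← hJ1]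
    have hab' : a - b ≠ 0 := sub_ne_zero.2 hab.ne
    field_simp
    ring
  have S2 : (∫ t in (0:ℝ)..1, t ^ 3 * f''' (((2 - t) / 2) * a + (t / 2) * b))
      = 96 / (b - a) ^ 4 * J2 := by
    have heq : ∀ t : ℝ, t ^ 3 * f''' (((2 - t) / 2) * a + (t / 2) * b)
        = (fun u => -((2 / (b - a)) ^ 3 * 6) * ((a - u) ^ 3 / 6 * f''' u)) ((b - a) / 2 * t + a) := by
      intro t
      dsimp only
      have harg : (b - a) / 2 * t + a = ((2 - t) / 2) * a + (t / 2) * b := by ring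
      rw [harg]
      have h2 : (a - (((2 - t) / 2) * a + (t / 2) * b)) = -((b - a) / 2 * t) := by ring
      rw [h2]
      field_simp
    simp only [heq]
    rw [intervalIntegral.integral_comp_mul_add
      (fun u => -((2 / (b - a)) ^ 3 * 6) * ((a - u) ^ 3 / 6 * f''' u)) (by simpa using hba : (b - a) / 2 ≠ 0) a]
    have hend1 : (b - a) / 2 * 0 + a = a := by ring
    have hend2 : (b - a) / 2 * 1 + a = m := by rw [hm]; ring
    rw [hend1, hend2, intervalIntegral.integral_symm,
      intervalIntegral.integral_const_mul, smul_eq_mul, ← hJ2]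
    field_simp
    ring
  have hfiab : IntervalIntegrable f volume a b := hfi1.trans hfi2
  have hsplit2 : (∫ x in a..b, (f x - f m - (b - a) ^ 2 / 24 * f'' m))
      = (F b - F a) - (b - a) * f m - (b - a) * ((b - a) ^ 2 / 24 * f'' m) := by
    rw [intervalIntegral.integral_sub (hfiab.sub intervalIntegrable_const)
        intervalIntegrable_const,
      intervalIntegral.integral_sub hfiab intervalIntegrable_const, hsplit,
      intervalIntegral.integral_const, intervalIntegral.integral_const, smul_eq_mul, smul_eq_mul]
  rw [S1, S2, hsplit2, TB, TA, hFm, hm]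
  field_simp
  ring
end

section
/- Let f : I → [0,∞) be three times differentiable on the interior of interval I, a, b in the interior with a < b, f''' integrable on [a,b], and suppose |f'''| is log-convex on [a,b] with |f'''(a)| ≠ |f'''(b)| and both nonzero. Then |(1/(b-a))·∫_a^b f(x) dx − f((a+b)/2) − ((b-a)²/24)·f''((a+b)/2)| ≤ ((b-a)³/96)·(|f'''(b)|·μ_K + |f'''(a)|·μ_M), where K = |f'''(a)|/|f'''(b)|, M = |f'''(b)|/|f'''(a)|, and for any positive c ≠ 1, μ_c = 2·c^{1/2}·(ln c − 6)/(ln c)² + 48·c^{1/2}·(ln c − 2)/(ln c)⁴ + 96/(ln c)⁴. -/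
open MeasureTheory intervalIntegral

lemma antider (c : ℝ) (hc : c ≠ 0) (x y : ℝ) :
    ∫ u in x..y, u^3/6 * Real.exp (c*u) =
      (Real.exp (c*y) * (y^3/(6*c) - y^2/(2*c^2) + y/c^3 - 1/c^4))
      - (Real.exp (c*x) * (x^3/(6*c) - x^2/(2*c^2) + x/c^3 - 1/c^4)) := by
  have key : ∀ u : ℝ, HasDerivAt
      (fun u => Real.exp (c*u) * (u^3/(6*c) - u^2/(2*c^2) + u/c^3 - 1/c^4))
      (u^3/6 * Real.exp (c*u)) u := by
    intro u
    have he : HasDerivAt (fun u => Real.exp (c*u)) (Real.exp (c*u) * c) u := by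
      simpa [mul_comm, Function.comp_def] using (Real.hasDerivAt_exp (c*u)).comp u ((hasDerivAt_id u).const_mul c)
    have hp := ((((hasDerivAt_pow 3 u).div_const (6*c)).fun_sub
        ((hasDerivAt_pow 2 u).div_const (2*c^2))).fun_add
        ((hasDerivAt_id u).div_const (c^3))).sub_const (1/c^4)
    have := he.fun_mul hp
    refine this.congr_deriv ?_
    push_cast [id_eq]
    field_simp
    ring
  rw [intervalIntegral.integral_eq_sub_of_hasDerivAt (fun u _ => key u)
    (Continuous.intervalIntegrable (by fun_prop) x y)]

lemma Jval (c : ℝ) (hc : c ≠ 0) (H : ℝ) :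
    ∫ u in (0:ℝ)..H, u^3/6 * Real.exp (c*u) =
      Real.exp (c*H) * (H^3/(6*c) - H^2/(2*c^2) + H/c^3 - 1/c^4) + 1/c^4 := by
  rw [antider c hc 0 H]; simp

lemma hasDerivAt_bsub_pow (n : ℕ) (b t : ℝ) :
    HasDerivAt (fun s : ℝ => (b - s)^n) (-((n:ℝ)*(b-t)^(n-1))) t := by
  have hbt : HasDerivAt (fun s : ℝ => b - s) (-1) t := by
    simpa using (hasDerivAt_id t).const_sub b
  simpa [Function.comp_def] using (hasDerivAt_pow n (b-t)).comp t hbt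

lemma hasDerivAt_suba_pow (n : ℕ) (a t : ℝ) :
    HasDerivAt (fun s : ℝ => (s - a)^n) ((n:ℝ)*(t-a)^(n-1)) t := by
  simpa [Function.comp_def] using (hasDerivAt_pow n (t-a)).comp t ((hasDerivAt_id t).sub_const a)

lemma combine (h L EK : ℝ) (hh : h ≠ 0) (hL : L ≠ 0) :
    EK * ((h/2)^3/(6*(L/h)) - (h/2)^2/(2*(L/h)^2) + (h/2)/(L/h)^3 - 1/(L/h)^4) + 1/(L/h)^4
    = h^4/96 * (2*EK*(L-6)/L^2 + 48*EK*(L-2)/L^4 + 96/L^4) := by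
  field_simp
  ring

noncomputable def mu (c : ℝ) : ℝ :=
  2 * c ^ ((1:ℝ)/2) * (Real.log c - 6) / (Real.log c) ^ 2
    + 48 * c ^ ((1:ℝ)/2) * (Real.log c - 2) / (Real.log c) ^ 4
    + 96 / (Real.log c) ^ 4

set_option maxHeartbeats 1000000 in
theorem thm_2_1
    (I : Set ℝ) (hI : I.OrdConnected)
    (f f' f'' f''' : ℝ → ℝ)
    (hfpos : ∀ x ∈ I, 0 ≤ f x)
    (a b : ℝ) (ha : a ∈ interior I) (hb : b ∈ interior I) (hab : a < b)
    (hf' : ∀ x ∈ interior I, HasDerivAt f (f' x) x)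
    (hf'' : ∀ x ∈ interior I, HasDerivAt f' (f'' x) x)
    (hf''' : ∀ x ∈ interior I, HasDerivAt f'' (f''' x) x)
    (hint : IntegrableOn f''' (Set.Icc a b))
    (hlog : ∀ x ∈ Set.Icc a b, ∀ y ∈ Set.Icc a b, ∀ α ∈ Set.Icc (0:ℝ) 1,
      |f''' (α * x + (1 - α) * y)| ≤ |f''' x| ^ α * |f''' y| ^ (1 - α))
    (hA : 0 < |f''' a|) (hB : 0 < |f''' b|) (hne : |f''' a| ≠ |f''' b|) :
    |(1 / (b - a)) * ∫ x in a..b, f x - f ((a + b) / 2)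
        - ((b - a) ^ 2 / 24) * f'' ((a + b) / 2)|
    ≤ ((b - a) ^ 3 / 96) *
        (|f''' b| * mu (|f''' a| / |f''' b|)
          + |f''' a| * mu (|f''' b| / |f''' a|)) := by
  set m : ℝ := (a + b) / 2 with hm
  have hh0 : (0:ℝ) < b - a := sub_pos.mpr hab
  have ham : a ≤ m := by rw [hm]; linarith
  have hmb : m ≤ b := by rw [hm]; linarith
  have hsub : Set.Icc a b ⊆ interior I := by
    have hIoo : Set.Ioo a b ⊆ interior I :=
      interior_maximal (fun y hy =>
        hI.out (interior_subset ha) (interior_subset hb) ⟨le_of_lt hy.1, le_of_lt hy.2⟩)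
        isOpen_Ioo
    intro x hx
    rcases eq_or_lt_of_le hx.1 with h1 | h1
    · exact h1 ▸ ha
    rcases eq_or_lt_of_le hx.2 with h2 | h2
    · exact h2.symm ▸ hb
    · exact hIoo ⟨h1, h2⟩
  have hcf : ContinuousOn f (Set.Icc a b) := fun x hx =>
    ((hf' x (hsub hx)).continuousAt).continuousWithinAt
  have huR : Set.uIcc m b = Set.Icc m b := Set.uIcc_of_le hmb
  have huL : Set.uIcc a m = Set.Icc a m := Set.uIcc_of_le ham
  have hRsub : Set.Icc m b ⊆ Set.Icc a b := Set.Icc_subset_Icc ham le_rfl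
  have hLsub : Set.Icc a m ⊆ Set.Icc a b := Set.Icc_subset_Icc le_rfl hmb
  have hi3R : IntervalIntegrable f''' volume m b := by
    have : IntegrableOn f''' (Set.uIcc m b) := huR ▸ hint.mono_set hRsub
    exact this.intervalIntegrable
  have hi3L : IntervalIntegrable f''' volume a m := by
    have : IntegrableOn f''' (Set.uIcc a m) := huL ▸ hint.mono_set hLsub
    exact this.intervalIntegrable
  have hciR : IntervalIntegrable (fun t => (b-t)^3/6 * f''' t) volume m b :=
    hi3R.continuousOn_mul (by fun_prop)
  have hciL : IntervalIntegrable (fun t => (t-a)^3/6 * f''' t) volume a m :=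
    hi3L.continuousOn_mul (by fun_prop)
  have hcfR : IntervalIntegrable f volume m b := by
    have : ContinuousOn f (Set.uIcc m b) := huR ▸ hcf.mono hRsub
    exact this.intervalIntegrable
  have hcfL : IntervalIntegrable f volume a m := by
    have : ContinuousOn f (Set.uIcc a m) := huL ▸ hcf.mono hLsub
    exact this.intervalIntegrable
  -- the right-half identity
  have hgR : ∀ t ∈ Set.uIcc m b,
      HasDerivAt (fun t => (b-t)^3/6 * f'' t + (b-t)^2/2 * f' t + (b-t)^1 * f t)
        ((b-t)^3/6 * f''' t - f t) t := by
    intro t ht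
    have ht' : t ∈ interior I := hsub (hRsub (huR ▸ ht))
    have p3 := (hasDerivAt_bsub_pow 3 b t).div_const 6
    have p2 := (hasDerivAt_bsub_pow 2 b t).div_const 2
    have p1 := hasDerivAt_bsub_pow 1 b t
    have H := ((p3.fun_mul (hf''' t ht')).fun_add (p2.fun_mul (hf'' t ht'))).fun_add (p1.fun_mul (hf' t ht'))
    refine H.congr_deriv ?_
    push_cast
    ring
  have hI2 : ∫ t in m..b, (b-t)^3/6 * f''' t =
      (∫ t in m..b, f t) - (b-m)^3/6 * f'' m - (b-m)^2/2 * f' m - (b-m) * f m := by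
    have ID2 := integral_eq_sub_of_hasDerivAt hgR (hciR.sub hcfR)
    rw [integral_sub hciR hcfR] at ID2
    norm_num at ID2
    linarith [ID2]
  -- the left-half identity
  have hgL : ∀ t ∈ Set.uIcc a m,
      HasDerivAt (fun t => (t-a)^3/6 * f'' t - (t-a)^2/2 * f' t + (t-a)^1 * f t)
        ((t-a)^3/6 * f''' t + f t) t := by
    intro t ht
    have ht' : t ∈ interior I := hsub (hLsub (huL ▸ ht))
    have p3 := (hasDerivAt_suba_pow 3 a t).div_const 6
    have p2 := (hasDerivAt_suba_pow 2 a t).div_const 2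
    have p1 := hasDerivAt_suba_pow 1 a t
    have H := ((p3.fun_mul (hf''' t ht')).fun_sub (p2.fun_mul (hf'' t ht'))).fun_add (p1.fun_mul (hf' t ht'))
    refine H.congr_deriv ?_
    push_cast
    ring
  have hI1 : ∫ t in a..m, (t-a)^3/6 * f''' t =
      (m-a)^3/6 * f'' m - (m-a)^2/2 * f' m + (m-a) * f m - ∫ t in a..m, f t := by
    have ID1 := integral_eq_sub_of_hasDerivAt hgL (hciL.add hcfL)
    rw [integral_add hciL hcfL] at ID1
    norm_num at ID1
    linarith [ID1]
  have hadd : (∫ t in a..m, f t) + (∫ t in m..b, f t) = ∫ t in a..b, f t :=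
    integral_add_adjacent_intervals hcfL hcfR
  have hbm : b - m = (b-a)/2 := by rw [hm]; ring
  have hma : m - a = (b-a)/2 := by rw [hm]; ring
  have hIdent : (1/(b-a)) * (∫ x in a..b, f x) - f m - ((b-a)^2/24) * f'' m
      = (1/(b-a)) * ((∫ t in m..b, (b-t)^3/6 * f''' t)
          - (∫ t in a..m, (t-a)^3/6 * f''' t)) := by
    rw [hI2, hI1, ← hadd, hbm, hma]
    field_simp
    ring

  have huab : Set.uIcc a b = Set.Icc a b := Set.uIcc_of_le hab.le
  have hiab : IntervalIntegrable f volume a b := by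
    have : ContinuousOn f (Set.uIcc a b) := huab ▸ hcf
    exact this.intervalIntegrable
  have hsplit : ∫ x in a..b, (f x - f m - (b - a) ^ 2 / 24 * f'' m)
      = (∫ x in a..b, f x) - (b-a) * (f m + (b - a) ^ 2 / 24 * f'' m) := by
    rw [integral_sub (hiab.sub (intervalIntegrable_const)) (intervalIntegrable_const),
      integral_sub hiab (intervalIntegrable_const), intervalIntegral.integral_const, intervalIntegral.integral_const]
    simp only [smul_eq_mul]
    ring
  have hgoalL : 1/(b-a) * ∫ x in a..b, (f x - f m - (b - a) ^ 2 / 24 * f'' m)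
      = 1/(b-a) * ((∫ t in m..b, (b-t)^3/6 * f''' t)
          - ∫ t in a..m, (t-a)^3/6 * f''' t) := by
    rw [hsplit, ← hIdent]
    field_simp
    ring
  rw [show (1:ℝ) / (b - a) * ∫ x in a..b, (f x - f m - (b - a) ^ 2 / 24 * f'' m)
      = 1/(b-a) * ((∫ t in m..b, (b-t)^3/6 * f''' t)
          - ∫ t in a..m, (t-a)^3/6 * f''' t) from hgoalL]
  -- logarithm setup
  set LK := Real.log (|f''' a| / |f''' b|) with hLK
  set LM := Real.log (|f''' b| / |f''' a|) with hLM
  have hKpos : 0 < |f''' a| / |f''' b| := div_pos hA hB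
  have hMpos : 0 < |f''' b| / |f''' a| := div_pos hB hA
  have hLK0 : LK ≠ 0 := Real.log_ne_zero_of_pos_of_ne_one hKpos
    (fun h => hne (by rwa [div_eq_one_iff_eq hB.ne'] at h))
  have hLM0 : LM ≠ 0 := Real.log_ne_zero_of_pos_of_ne_one hMpos
    (fun h => hne (by rw [div_eq_one_iff_eq hA.ne'] at h; exact h.symm))
  have hLKd : LK = Real.log |f''' a| - Real.log |f''' b| := by
    rw [hLK, Real.log_div hA.ne' hB.ne']
  have hLMd : LM = Real.log |f''' b| - Real.log |f''' a| := by
    rw [hLM, Real.log_div hB.ne' hA.ne']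
  -- pointwise bound from log-convexity
  have hbd : ∀ t ∈ Set.Icc a b,
      |f''' t| ≤ |f''' b| * Real.exp (LK/(b-a) * (b-t)) ∧
      |f''' t| ≤ |f''' a| * Real.exp (LM/(b-a) * (t-a)) := by
    intro t ht
    have hα0 : 0 ≤ (t - a)/(b - a) := div_nonneg (by linarith [ht.1]) hh0.le
    have hα1 : (t - a)/(b - a) ≤ 1 := (div_le_one hh0).mpr (by linarith [ht.2])
    have hteq : (t - a)/(b - a) * b + (1 - (t - a)/(b - a)) * a = t := by
      field_simp
      ring
    have h1 := hlog b (Set.right_mem_Icc.mpr hab.le) a (Set.left_mem_Icc.mpr hab.le)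
      ((t - a)/(b - a)) ⟨hα0, hα1⟩
    rw [hteq] at h1
    rw [Real.rpow_def_of_pos hB, Real.rpow_def_of_pos hA] at h1
    constructor
    · refine h1.trans (le_of_eq ?_)
      rw [← Real.exp_add]
      conv_rhs => rw [← Real.exp_log hB, ← Real.exp_add]
      congr 1
      rw [hLKd]
      field_simp
      ring
    · refine h1.trans (le_of_eq ?_)
      rw [← Real.exp_add]
      conv_rhs => rw [← Real.exp_log hA, ← Real.exp_add]
      congr 1
      rw [hLMd]
      field_simp
      ring
  -- comparison of the two half integrals
  have hIb2 : |∫ t in m..b, (b-t)^3/6 * f''' t|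
      ≤ |f''' b| * ∫ t in m..b, (b-t)^3/6 * Real.exp (LK/(b-a) * (b-t)) := by
    rw [← intervalIntegral.integral_const_mul]
    refine (abs_integral_le_integral_abs hmb).trans ?_
    refine integral_mono_on hmb hciR.abs (Continuous.intervalIntegrable (by fun_prop) _ _) ?_
    intro t ht
    have h0 : (0:ℝ) ≤ (b-t)^3/6 := by
      have : (0:ℝ) ≤ b - t := by linarith [ht.2]
      positivity
    calc |(b-t)^3/6 * f''' t| = (b-t)^3/6 * |f''' t| := by
          rw [abs_mul, abs_of_nonneg h0]
      _ ≤ (b-t)^3/6 * (|f''' b| * Real.exp (LK/(b-a) * (b-t))) :=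
          mul_le_mul_of_nonneg_left (hbd t (hRsub ht)).1 h0
      _ = |f''' b| * ((b-t)^3/6 * Real.exp (LK/(b-a) * (b-t))) := by ring
  have hIb1 : |∫ t in a..m, (t-a)^3/6 * f''' t|
      ≤ |f''' a| * ∫ t in a..m, (t-a)^3/6 * Real.exp (LM/(b-a) * (t-a)) := by
    rw [← intervalIntegral.integral_const_mul]
    refine (abs_integral_le_integral_abs ham).trans ?_
    refine integral_mono_on ham hciL.abs (Continuous.intervalIntegrable (by fun_prop) _ _) ?_
    intro t ht
    have h0 : (0:ℝ) ≤ (t-a)^3/6 := by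
      have : (0:ℝ) ≤ t - a := by linarith [ht.1]
      positivity
    calc |(t-a)^3/6 * f''' t| = (t-a)^3/6 * |f''' t| := by
          rw [abs_mul, abs_of_nonneg h0]
      _ ≤ (t-a)^3/6 * (|f''' a| * Real.exp (LM/(b-a) * (t-a))) :=
          mul_le_mul_of_nonneg_left (hbd t (hLsub ht)).2 h0
      _ = |f''' a| * ((t-a)^3/6 * Real.exp (LM/(b-a) * (t-a))) := by ring
  -- exact values of the comparison integrals
  have hcK : LK/(b-a) ≠ 0 := div_ne_zero hLK0 hh0.ne'
  have hcM : LM/(b-a) ≠ 0 := div_ne_zero hLM0 hh0.ne'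
  have JK : ∫ t in m..b, (b-t)^3/6 * Real.exp (LK/(b-a) * (b-t))
      = Real.exp (LK/(b-a)*((b-a)/2)) * (((b-a)/2)^3/(6*(LK/(b-a)))
          - ((b-a)/2)^2/(2*(LK/(b-a))^2) + ((b-a)/2)/(LK/(b-a))^3 - 1/(LK/(b-a))^4)
        + 1/(LK/(b-a))^4 := by
    have h := intervalIntegral.integral_comp_sub_left
      (fun u => u^3/6 * Real.exp (LK/(b-a)*u)) b (a := m) (b := b)
    rw [show (∫ t in m..b, (b-t)^3/6 * Real.exp (LK/(b-a) * (b-t)))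
        = ∫ u in (b-b)..(b-m), u^3/6 * Real.exp (LK/(b-a)*u) from h]
    rw [sub_self, hbm]
    exact Jval _ hcK _
  have JM : ∫ t in a..m, (t-a)^3/6 * Real.exp (LM/(b-a) * (t-a))
      = Real.exp (LM/(b-a)*((b-a)/2)) * (((b-a)/2)^3/(6*(LM/(b-a)))
          - ((b-a)/2)^2/(2*(LM/(b-a))^2) + ((b-a)/2)/(LM/(b-a))^3 - 1/(LM/(b-a))^4)
        + 1/(LM/(b-a))^4 := by
    have h := intervalIntegral.integral_comp_sub_right
      (fun u => u^3/6 * Real.exp (LM/(b-a)*u)) a (a := a) (b := m)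
    rw [show (∫ t in a..m, (t-a)^3/6 * Real.exp (LM/(b-a) * (t-a)))
        = ∫ u in (a-a)..(m-a), u^3/6 * Real.exp (LM/(b-a)*u) from h]
    rw [sub_self, hma]
    exact Jval _ hcM _
  -- put everything together
  calc |1/(b-a) * ((∫ t in m..b, (b-t)^3/6 * f''' t)
          - ∫ t in a..m, (t-a)^3/6 * f''' t)|
      = 1/(b-a) * |(∫ t in m..b, (b-t)^3/6 * f''' t)
          - ∫ t in a..m, (t-a)^3/6 * f''' t| := by
        rw [abs_mul, abs_of_nonneg (by positivity)]
    _ ≤ 1/(b-a) * (|∫ t in m..b, (b-t)^3/6 * f''' t|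
          + |∫ t in a..m, (t-a)^3/6 * f''' t|) :=
        mul_le_mul_of_nonneg_left (abs_sub _ _) (by positivity)
    _ ≤ 1/(b-a) * ((|f''' b| * ∫ t in m..b, (b-t)^3/6 * Real.exp (LK/(b-a) * (b-t)))
          + |f''' a| * ∫ t in a..m, (t-a)^3/6 * Real.exp (LM/(b-a) * (t-a))) :=
        mul_le_mul_of_nonneg_left (add_le_add hIb2 hIb1) (by positivity)
    _ = (b - a) ^ 3 / 96 * (|f''' b| * mu (|f''' a| / |f''' b|)
          + |f''' a| * mu (|f''' b| / |f''' a|)) := by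
        rw [JK, JM, mu, mu, Real.rpow_def_of_pos hKpos, Real.rpow_def_of_pos hMpos,
          ← hLK, ← hLM,
          show LK/(b-a)*((b-a)/2) = LK*(1/2) from by field_simp,
          show LM/(b-a)*((b-a)/2) = LM*(1/2) from by field_simp]
        generalize Real.exp (LK * (1/2)) = EK
        generalize Real.exp (LM * (1/2)) = EM
        rw [combine (b-a) LK EK hh0.ne' hLK0, combine (b-a) LM EM hh0.ne' hLM0]
        generalize (2*EK*(LK-6)/LK^2 + 48*EK*(LK-2)/LK^4 + 96/LK^4) = X
        generalize (2*EM*(LM-6)/LM^2 + 48*EM*(LM-2)/LM^4 + 96/LM^4) = Y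
        calc 1/(b-a) * (|f''' b| * ((b-a)^4/96 * X) + |f''' a| * ((b-a)^4/96 * Y))
            = ((b-a) * (b-a)⁻¹) * ((b-a)^3/96 * (|f''' b| * X + |f''' a| * Y)) := by
              rw [one_div]; ring
          _ = (b-a)^3/96 * (|f''' b| * X + |f''' a| * Y) := by
              rw [mul_inv_cancel₀ hh0.ne', one_mul]
end

section
/- Let f : I → [0,∞) be three times differentiable on the interior of interval I, a, b in the interior with a < b, f''' integrable on [a,b], with f''((a+b)/2) = 0, and |f'''| log-convex on [a,b] with |f'''(a)|, |f'''(b)| positive and distinct. Then |(1/(b-a))·∫_a^b f(x) dx − f((a+b)/2)| ≤ ((b-a)³/96)·(|f'''(b)|·μ_K + |f'''(a)|·μ_M), where K = |f'''(a)|/|f'''(b)|, M = |f'''(b)|/|f'''(a)|, and μ_c = 2·c^{1/2}·(ln c − 6)/(ln c)² + 48·c^{1/2}·(ln c − 2)/(ln c)⁴ + 96/(ln c)⁴ for positive c ≠ 1. -/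
open MeasureTheory intervalIntegral

noncomputable def EE (X : ℝ) : ℝ :=
  (Real.exp (X/2) * (X^3/8 - 3*X^2/4 + 3*X - 6) + 6) / X^4

lemma deriv_aux (L : ℝ) (hL : L ≠ 0) (s : ℝ) :
    HasDerivAt (fun s => Real.exp (L*s) * (L^3*s^3 - 3*L^2*s^2 + 6*L*s - 6) / L^4)
      (s^3 * Real.exp (L*s)) s := by
  have h1 : HasDerivAt (fun s : ℝ => Real.exp (L*s)) (Real.exp (L*s) * L) s := by
    simpa using ((hasDerivAt_id s).const_mul L).exp
  have h2 : HasDerivAt (fun s : ℝ => L^3*s^3 - 3*L^2*s^2 + 6*L*s - 6)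
      (L^3*(3*s^2) - 3*L^2*(2*s) + 6*L) s := by
    have := ((((hasDerivAt_pow 3 s).const_mul (L^3)).sub
      ((hasDerivAt_pow 2 s).const_mul (3*L^2))).add
      (((hasDerivAt_id s).const_mul (6*L)))).sub_const 6
    exact this.congr_deriv (by norm_num)
  have h3 := (h1.mul h2).div_const (L^4)
  exact h3.congr_deriv (by field_simp; ring)

lemma key_integral (L : ℝ) (hL : L ≠ 0) :
    ∫ s in (0:ℝ)..(1/2), s^3 * Real.exp (L*s) = EE L := by
  rw [intervalIntegral.integral_eq_sub_of_hasDerivAt (fun s _ => deriv_aux L hL s)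
    (((continuous_pow 3).mul (Real.continuous_exp.comp
      (continuous_const.mul continuous_id))).intervalIntegrable _ _)]
  rw [mul_zero, Real.exp_zero]
  have h : L * (1/2) = L/2 := by ring
  rw [h]
  unfold EE
  field_simp
  ring

lemma mu_eq (c : ℝ) (hc : 0 < c) (hc1 : c ≠ 1) : mu c = 16 * EE (Real.log c) := by
  have hl : Real.log c ≠ 0 := Real.log_ne_zero_of_pos_of_ne_one hc hc1
  have h2 : c ^ ((1:ℝ)/2) = Real.exp (Real.log c / 2) := by
    rw [Real.rpow_def_of_pos hc]; ring_nf
  unfold mu EE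
  rw [h2]
  field_simp
  ring

lemma negint (g h : ℝ → ℝ) (p q : ℝ) :
    ∫ t in p..q, (-(g t)) * h t = -∫ t in p..q, g t * h t := by
  rw [← intervalIntegral.integral_neg]; congr 1; funext t; ring

lemma identity (f f' f'' f''' : ℝ → ℝ) (a b : ℝ) (hab : a < b)
    (hf' : ∀ x ∈ Set.Icc a b, HasDerivAt f (f' x) x)
    (hf'' : ∀ x ∈ Set.Icc a b, HasDerivAt f' (f'' x) x)
    (hf''' : ∀ x ∈ Set.Icc a b, HasDerivAt f'' (f''' x) x)
    (hint : IntegrableOn f''' (Set.Icc a b))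
    (hmid : f'' ((a + b) / 2) = 0) :
    (∫ x in a..b, f x) - (b - a) * f ((a + b) / 2)
      = (∫ t in ((a + b) / 2)..b, (b - t) ^ 3 / 6 * f''' t)
        - ∫ t in a..((a + b) / 2), (t - a) ^ 3 / 6 * f''' t := by
  set m := (a + b) / 2 with hm
  have ham : a ≤ m := by simp [hm]; linarith
  have hmb : m ≤ b := by simp [hm]; linarith
  have hIl : Set.uIcc m b ⊆ Set.Icc a b := by
    rw [Set.uIcc_of_le hmb]; exact Set.Icc_subset_Icc ham le_rfl
  have hIr : Set.uIcc a m ⊆ Set.Icc a b := by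
    rw [Set.uIcc_of_le ham]; exact Set.Icc_subset_Icc le_rfl hmb
  have hfc : ContinuousOn f (Set.Icc a b) :=
    fun x hx => (hf' x hx).continuousAt.continuousWithinAt
  have hf'c : ContinuousOn f' (Set.Icc a b) :=
    fun x hx => (hf'' x hx).continuousAt.continuousWithinAt
  have hf''c : ContinuousOn f'' (Set.Icc a b) :=
    fun x hx => (hf''' x hx).continuousAt.continuousWithinAt
  have hw3b : ∀ t : ℝ, HasDerivAt (fun t => (b - t) ^ 3 / 6) (-((b - t) ^ 2 / 2)) t := by
    intro t
    have := (((hasDerivAt_id t).const_sub b).pow 3).div_const 6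
    exact this.congr_deriv (by norm_num; ring)
  have hw2b : ∀ t : ℝ, HasDerivAt (fun t => (b - t) ^ 2 / 2) (-(b - t)) t := by
    intro t
    have := (((hasDerivAt_id t).const_sub b).pow 2).div_const 2
    exact this.congr_deriv (by norm_num; ring)
  have hw1b : ∀ t : ℝ, HasDerivAt (fun t => b - t) (-(1:ℝ)) t :=
    fun t => by simpa using (hasDerivAt_id t).const_sub b
  have hw3a : ∀ t : ℝ, HasDerivAt (fun t => (t - a) ^ 3 / 6) ((t - a) ^ 2 / 2) t := by
    intro t
    have := (((hasDerivAt_id t).sub_const a).pow 3).div_const 6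
    exact this.congr_deriv (by norm_num; ring)
  have hw2a : ∀ t : ℝ, HasDerivAt (fun t => (t - a) ^ 2 / 2) (t - a) t := by
    intro t
    have := (((hasDerivAt_id t).sub_const a).pow 2).div_const 2
    exact this.congr_deriv (by norm_num)
  have hw1a : ∀ t : ℝ, HasDerivAt (fun t => t - a) (1:ℝ) t :=
    fun t => by simpa using (hasDerivAt_id t).sub_const a
  have e1 : ∫ t in m..b, (b - t) ^ 3 / 6 * f''' t
      = ∫ t in m..b, (b - t) ^ 2 / 2 * f'' t := by
    rw [intervalIntegral.integral_mul_deriv_eq_deriv_mul (fun t _ => hw3b t)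
      (fun x hx => hf''' x (hIl hx))
      ((by fun_prop : Continuous fun t : ℝ => -((b - t) ^ 2 / 2)).intervalIntegrable _ _)
      ((hint.mono_set hIl).intervalIntegrable)]
    rw [negint (fun t => (b - t) ^ 2 / 2) f'' m b]
    simp [hmid]
  have e2 : ∫ t in m..b, (b - t) ^ 2 / 2 * f'' t
      = -((b - m) ^ 2 / 2 * f' m) + ∫ t in m..b, (b - t) * f' t := by
    rw [intervalIntegral.integral_mul_deriv_eq_deriv_mul (fun t _ => hw2b t)
      (fun x hx => hf'' x (hIl hx))
      ((by fun_prop : Continuous fun t : ℝ => -(b - t)).intervalIntegrable _ _)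
      ((hf''c.mono hIl).intervalIntegrable)]
    rw [negint (fun t => b - t) f' m b]
    simp
  have e3 : ∫ t in m..b, (b - t) * f' t
      = -((b - m) * f m) + ∫ t in m..b, f t := by
    rw [intervalIntegral.integral_mul_deriv_eq_deriv_mul (fun t _ => hw1b t)
      (fun x hx => hf' x (hIl hx))
      (continuous_const.intervalIntegrable _ _)
      ((hf'c.mono hIl).intervalIntegrable)]
    rw [negint (fun _ => (1:ℝ)) f m b]
    simp
  have e1' : ∫ t in a..m, (t - a) ^ 3 / 6 * f''' t
      = -∫ t in a..m, (t - a) ^ 2 / 2 * f'' t := by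
    rw [intervalIntegral.integral_mul_deriv_eq_deriv_mul (fun t _ => hw3a t)
      (fun x hx => hf''' x (hIr hx))
      ((by fun_prop : Continuous fun t : ℝ => (t - a) ^ 2 / 2).intervalIntegrable _ _)
      ((hint.mono_set hIr).intervalIntegrable)]
    simp [hmid]
  have e2' : ∫ t in a..m, (t - a) ^ 2 / 2 * f'' t
      = (m - a) ^ 2 / 2 * f' m - ∫ t in a..m, (t - a) * f' t := by
    rw [intervalIntegral.integral_mul_deriv_eq_deriv_mul (fun t _ => hw2a t)
      (fun x hx => hf'' x (hIr hx))
      ((by fun_prop : Continuous fun t : ℝ => t - a).intervalIntegrable _ _)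
      ((hf''c.mono hIr).intervalIntegrable)]
    simp
  have e3' : ∫ t in a..m, (t - a) * f' t
      = (m - a) * f m - ∫ t in a..m, f t := by
    rw [intervalIntegral.integral_mul_deriv_eq_deriv_mul (fun t _ => hw1a t)
      (fun x hx => hf' x (hIr hx))
      (continuous_const.intervalIntegrable _ _)
      ((hf'c.mono hIr).intervalIntegrable)]
    simp
  have hadd : (∫ t in a..m, f t) + (∫ t in m..b, f t) = ∫ t in a..b, f t :=
    integral_add_adjacent_intervals ((hfc.mono hIr).intervalIntegrable)
      ((hfc.mono hIl).intervalIntegrable)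
  have hmm : m - a = b - m := by rw [hm]; ring
  rw [e1, e2, e3, e1', e2', e3', ← hadd, hmm]
  ring

theorem cor_1_1
    (I : Set ℝ) (hI : I.OrdConnected)
    (f f' f'' f''' : ℝ → ℝ)
    (hfpos : ∀ x ∈ I, 0 ≤ f x)
    (a b : ℝ) (ha : a ∈ interior I) (hb : b ∈ interior I) (hab : a < b)
    (hf' : ∀ x ∈ interior I, HasDerivAt f (f' x) x)
    (hf'' : ∀ x ∈ interior I, HasDerivAt f' (f'' x) x)
    (hf''' : ∀ x ∈ interior I, HasDerivAt f'' (f''' x) x)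
    (hint : IntegrableOn f''' (Set.Icc a b))
    (hlog : ∀ x ∈ Set.Icc a b, ∀ y ∈ Set.Icc a b, ∀ α ∈ Set.Icc (0:ℝ) 1,
      |f''' (α * x + (1 - α) * y)| ≤ |f''' x| ^ α * |f''' y| ^ (1 - α))
    (hmid : f'' ((a + b) / 2) = 0)
    (hA : 0 < |f''' a|) (hB : 0 < |f''' b|) (hne : |f''' a| ≠ |f''' b|) :
    |(1 / (b - a)) * ∫ x in a..b, f x - f ((a + b) / 2)|
    ≤ ((b - a) ^ 3 / 96) *
        (|f''' b| * mu (|f''' a| / |f''' b|)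
          + |f''' a| * mu (|f''' b| / |f''' a|)) := by
  have hIcc : Set.Icc a b ⊆ interior I := hI.interior.out ha hb
  have hba : (0:ℝ) < b - a := by linarith
  set m := (a + b) / 2 with hm
  have ham : a ≤ m := by rw [hm]; linarith
  have hmb : m ≤ b := by rw [hm]; linarith
  set A := |f''' a| with hAdef
  set B := |f''' b| with hBdef
  set L := Real.log B - Real.log A with hLdef
  have hLne : L ≠ 0 := by
    rw [hLdef, sub_ne_zero]
    intro h
    exact hne (Real.log_injOn_pos (Set.mem_Ioi.mpr hA) (Set.mem_Ioi.mpr hB) h.symm)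
  have hLne' : -L ≠ 0 := neg_ne_zero.mpr hLne
  -- the identity
  have hid := identity f f' f'' f''' a b hab
    (fun x hx => hf' x (hIcc hx)) (fun x hx => hf'' x (hIcc hx))
    (fun x hx => hf''' x (hIcc hx)) hint hmid
  rw [← hm] at hid
  -- pointwise bounds
  have hbd1 : ∀ t ∈ Set.Icc a m, |(t - a) ^ 3 / 6 * f''' t|
      ≤ (t - a) ^ 3 / 6 * (A * Real.exp (L * ((t - a) / (b - a)))) := by
    intro t ht
    obtain ⟨ht1, ht2⟩ := ht
    set α := (t - a) / (b - a) with hα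
    have hα0 : 0 ≤ α := div_nonneg (by linarith) hba.le
    have hα1 : α ≤ 1 := by
      rw [hα, div_le_one hba]; linarith
    have hco : α * b + (1 - α) * a = t := by
      rw [hα]; field_simp; ring
    have hlb := hlog b (Set.right_mem_Icc.mpr hab.le) a (Set.left_mem_Icc.mpr hab.le)
      α ⟨hα0, hα1⟩
    rw [hco] at hlb
    have heq : B ^ α * A ^ (1 - α) = A * Real.exp (L * α) := by
      rw [Real.rpow_def_of_pos hB, Real.rpow_def_of_pos hA, ← Real.exp_add]
      nth_rewrite 2 [← Real.exp_log hA]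
      rw [← Real.exp_add, hLdef]
      ring_nf
    have hw : (0:ℝ) ≤ (t - a) ^ 3 / 6 :=
      div_nonneg (pow_nonneg (by linarith) 3) (by norm_num)
    rw [abs_mul, abs_of_nonneg hw]
    exact mul_le_mul_of_nonneg_left (by rw [← heq]; exact hlb) hw
  have hbd2 : ∀ t ∈ Set.Icc m b, |(b - t) ^ 3 / 6 * f''' t|
      ≤ (b - t) ^ 3 / 6 * (B * Real.exp ((-L) * ((b - t) / (b - a)))) := by
    intro t ht
    obtain ⟨ht1, ht2⟩ := ht
    set α := (t - a) / (b - a) with hα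
    have hα0 : 0 ≤ α := div_nonneg (by linarith) hba.le
    have hα1 : α ≤ 1 := by
      rw [hα, div_le_one hba]; linarith
    have hco : α * b + (1 - α) * a = t := by
      rw [hα]; field_simp; ring
    have hlb := hlog b (Set.right_mem_Icc.mpr hab.le) a (Set.left_mem_Icc.mpr hab.le)
      α ⟨hα0, hα1⟩
    rw [hco] at hlb
    have h1α : (b - t) / (b - a) = 1 - α := by
      rw [hα]; field_simp; ring
    have heq : B ^ α * A ^ (1 - α) = B * Real.exp ((-L) * ((b - t) / (b - a))) := by
      rw [h1α, Real.rpow_def_of_pos hB, Real.rpow_def_of_pos hA, ← Real.exp_add]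
      nth_rewrite 2 [← Real.exp_log hB]
      rw [← Real.exp_add, hLdef]
      ring_nf
    have hw : (0:ℝ) ≤ (b - t) ^ 3 / 6 :=
      div_nonneg (pow_nonneg (by linarith) 3) (by norm_num)
    rw [abs_mul, abs_of_nonneg hw]
    exact mul_le_mul_of_nonneg_left (by rw [← heq]; exact hlb) hw
  -- integrability
  have hIr : Set.uIcc a m ⊆ Set.Icc a b := by
    rw [Set.uIcc_of_le ham]; exact Set.Icc_subset_Icc le_rfl hmb
  have hIl : Set.uIcc m b ⊆ Set.Icc a b := by
    rw [Set.uIcc_of_le hmb]; exact Set.Icc_subset_Icc ham le_rfl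
  have hi1 : IntervalIntegrable (fun t => (t - a) ^ 3 / 6 * f''' t) volume a m :=
    (hint.mono_set hIr).intervalIntegrable.continuousOn_mul (by fun_prop)
  have hi2 : IntervalIntegrable (fun t => (b - t) ^ 3 / 6 * f''' t) volume m b :=
    (hint.mono_set hIl).intervalIntegrable.continuousOn_mul (by fun_prop)
  have hg1 : IntervalIntegrable
      (fun t => (t - a) ^ 3 / 6 * (A * Real.exp (L * ((t - a) / (b - a))))) volume a m :=
    ((by fun_prop : Continuous fun t : ℝ =>
      (t - a) ^ 3 / 6 * (A * Real.exp (L * ((t - a) / (b - a))))).intervalIntegrable _ _)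
  have hg2 : IntervalIntegrable
      (fun t => (b - t) ^ 3 / 6 * (B * Real.exp ((-L) * ((b - t) / (b - a))))) volume m b :=
    ((by fun_prop : Continuous fun t : ℝ =>
      (b - t) ^ 3 / 6 * (B * Real.exp ((-L) * ((b - t) / (b - a))))).intervalIntegrable _ _)
  -- integral computations
  have comp1 : ∫ t in a..m, (t - a) ^ 3 / 6 * (A * Real.exp (L * ((t - a) / (b - a))))
      = A / 6 * ((b - a) ^ 4 * EE L) := by
    have hcne : (1 / (b - a)) ≠ 0 := one_div_ne_zero hba.ne'
    have congr1 : ∀ t : ℝ, (t - a) ^ 3 / 6 * (A * Real.exp (L * ((t - a) / (b - a))))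
        = A / 6 * ((fun s => ((b - a) * s) ^ 3 * Real.exp (L * s))
            ((1 / (b - a)) * t + -(a / (b - a)))) := by
      intro t
      have h1 : (1 / (b - a)) * t + -(a / (b - a)) = (t - a) / (b - a) := by ring
      have h2 : (b - a) * ((t - a) / (b - a)) = t - a := by field_simp
      dsimp only
      rw [h1, h2]
      ring
    rw [intervalIntegral.integral_congr (fun t _ => congr1 t)]
    rw [intervalIntegral.integral_const_mul]
    rw [intervalIntegral.integral_comp_mul_add
      (fun s => ((b - a) * s) ^ 3 * Real.exp (L * s)) hcne (-(a / (b - a)))]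
    have ep1 : (1 / (b - a)) * a + -(a / (b - a)) = 0 := by field_simp; ring
    have ep2 : (1 / (b - a)) * m + -(a / (b - a)) = 1 / 2 := by
      rw [hm]; field_simp; ring
    rw [ep1, ep2]
    have congr2 : ∀ s : ℝ, ((b - a) * s) ^ 3 * Real.exp (L * s)
        = (b - a) ^ 3 * (s ^ 3 * Real.exp (L * s)) := by intro s; ring
    rw [intervalIntegral.integral_congr (fun s _ => congr2 s),
      intervalIntegral.integral_const_mul, key_integral L hLne]
    simp only [smul_eq_mul, one_div, inv_inv]
    ring
  have comp2 : ∫ t in m..b, (b - t) ^ 3 / 6 * (B * Real.exp ((-L) * ((b - t) / (b - a))))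
      = B / 6 * ((b - a) ^ 4 * EE (-L)) := by
    have hcne : (-(1 / (b - a))) ≠ 0 := neg_ne_zero.mpr (one_div_ne_zero hba.ne')
    have congr1 : ∀ t : ℝ, (b - t) ^ 3 / 6 * (B * Real.exp ((-L) * ((b - t) / (b - a))))
        = B / 6 * ((fun s => ((b - a) * s) ^ 3 * Real.exp ((-L) * s))
            ((-(1 / (b - a))) * t + b / (b - a))) := by
      intro t
      have h1 : (-(1 / (b - a))) * t + b / (b - a) = (b - t) / (b - a) := by ring
      have h2 : (b - a) * ((b - t) / (b - a)) = b - t := by field_simp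
      dsimp only
      rw [h1, h2]
      ring
    rw [intervalIntegral.integral_congr (fun t _ => congr1 t)]
    rw [intervalIntegral.integral_const_mul]
    rw [intervalIntegral.integral_comp_mul_add
      (fun s => ((b - a) * s) ^ 3 * Real.exp ((-L) * s)) hcne (b / (b - a))]
    have ep1 : (-(1 / (b - a))) * m + b / (b - a) = 1 / 2 := by
      rw [hm]; field_simp; ring
    have ep2 : (-(1 / (b - a))) * b + b / (b - a) = 0 := by field_simp; ring
    rw [ep1, ep2]
    rw [intervalIntegral.integral_symm]
    have congr2 : ∀ s : ℝ, ((b - a) * s) ^ 3 * Real.exp ((-L) * s)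
        = (b - a) ^ 3 * (s ^ 3 * Real.exp ((-L) * s)) := by intro s; ring
    rw [intervalIntegral.integral_congr (fun s _ => congr2 s),
      intervalIntegral.integral_const_mul, key_integral (-L) hLne']
    simp only [smul_eq_mul, one_div, inv_neg, inv_inv]
    ring
  -- the two bounds
  have bnd1 : |∫ t in a..m, (t - a) ^ 3 / 6 * f''' t| ≤ A / 6 * ((b - a) ^ 4 * EE L) := by
    calc |∫ t in a..m, (t - a) ^ 3 / 6 * f''' t|
        ≤ ∫ t in a..m, |(t - a) ^ 3 / 6 * f''' t| :=
          intervalIntegral.abs_integral_le_integral_abs ham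
      _ ≤ ∫ t in a..m, (t - a) ^ 3 / 6 * (A * Real.exp (L * ((t - a) / (b - a)))) :=
          intervalIntegral.integral_mono_on ham hi1.abs hg1 hbd1
      _ = A / 6 * ((b - a) ^ 4 * EE L) := comp1
  have bnd2 : |∫ t in m..b, (b - t) ^ 3 / 6 * f''' t| ≤ B / 6 * ((b - a) ^ 4 * EE (-L)) := by
    calc |∫ t in m..b, (b - t) ^ 3 / 6 * f''' t|
        ≤ ∫ t in m..b, |(b - t) ^ 3 / 6 * f''' t| :=
          intervalIntegral.abs_integral_le_integral_abs hmb
      _ ≤ ∫ t in m..b, (b - t) ^ 3 / 6 * (B * Real.exp ((-L) * ((b - t) / (b - a)))) :=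
          intervalIntegral.integral_mono_on hmb hi2.abs hg2 hbd2
      _ = B / 6 * ((b - a) ^ 4 * EE (-L)) := comp2
  -- rewrite mu
  have hBA : (0:ℝ) < B / A := div_pos hB hA
  have hAB : (0:ℝ) < A / B := div_pos hA hB
  have hBA1 : B / A ≠ 1 := fun h => hne ((div_eq_one_iff_eq hA.ne').mp h).symm
  have hAB1 : A / B ≠ 1 := fun h => hne ((div_eq_one_iff_eq hB.ne').mp h)
  have hmu1 : mu (B / A) = 16 * EE L := by
    rw [mu_eq _ hBA hBA1, Real.log_div hB.ne' hA.ne', ← hLdef]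
  have hmu2 : mu (A / B) = 16 * EE (-L) := by
    rw [mu_eq _ hAB hAB1, Real.log_div hA.ne' hB.ne', hLdef]
    ring_nf
  -- final assembly
  have hfint : IntervalIntegrable f volume a b := by
    apply ContinuousOn.intervalIntegrable
    rw [Set.uIcc_of_le hab.le]
    exact fun x hx => (hf' x (hIcc hx)).continuousAt.continuousWithinAt
  have hsplit : (∫ x in a..b, (f x - f m)) = (∫ x in a..b, f x) - (b - a) * f m := by
    rw [intervalIntegral.integral_sub hfint (intervalIntegrable_const)]
    simp [smul_eq_mul]
  rw [hsplit, abs_mul, abs_of_pos (one_div_pos.mpr hba), hid]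
  have tri : |(∫ t in m..b, (b - t) ^ 3 / 6 * f''' t)
      - ∫ t in a..m, (t - a) ^ 3 / 6 * f''' t|
      ≤ B / 6 * ((b - a) ^ 4 * EE (-L)) + A / 6 * ((b - a) ^ 4 * EE L) :=
    (abs_sub _ _).trans (add_le_add bnd2 bnd1)
  calc (1 / (b - a)) * |(∫ t in m..b, (b - t) ^ 3 / 6 * f''' t)
      - ∫ t in a..m, (t - a) ^ 3 / 6 * f''' t|
      ≤ (1 / (b - a)) * (B / 6 * ((b - a) ^ 4 * EE (-L)) + A / 6 * ((b - a) ^ 4 * EE L)) :=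
        mul_le_mul_of_nonneg_left tri (one_div_pos.mpr hba).le
    _ = ((b - a) ^ 3 / 96) * (B * mu (A / B) + A * mu (B / A)) := by
        rw [hmu1, hmu2]; field_simp; ring
end

section
/- Let f : I → [0,∞) be three times differentiable on the interior of interval I, a, b in the interior with a < b, f''' integrable on [a,b], and let q > 1 with 1/p + 1/q = 1. Suppose |f'''|^q is log-convex on [a,b] and |f'''(a)|, |f'''(b)| are positive and distinct. Then |(1/(b-a))·∫_a^b f(x) dx − f((a+b)/2) − ((b-a)²/24)·f''((a+b)/2)| ≤ ((b-a)³/96)·(1/(3p+1))^{1/p}·[ |f'''(b)|·((2/(q·ln K))·(K^{q/2} − 1))^{1/q} + |f'''(a)|·((2/(q·ln M))·(M^{q/2} − 1))^{1/q} ], where K = |f'''(a)|/|f'''(b)| and M = |f'''(b)|/|f'''(a)|. -/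
open MeasureTheory intervalIntegral Set Real

-- FTC computations
lemma exp_int (c m d : ℝ) (hc : c ≠ 0) :
    ∫ t in m..d, Real.exp (c * (d - t)) = (Real.exp (c * (d - m)) - 1) / c := by
  have h : ∀ t ∈ Set.uIcc m d, HasDerivAt (fun t => -Real.exp (c * (d - t)) / c)
      (Real.exp (c * (d - t))) t := by
    intro t _
    have h1 : HasDerivAt (fun t : ℝ => c * (d - t)) (-c) t := by
      simpa using ((hasDerivAt_id t).const_sub d).const_mul c
    have h2 := (h1.exp).neg.div_const c
    exact h2.congr_deriv (by field_simp)
  have hint : IntervalIntegrable (fun t => Real.exp (c * (d - t))) volume m d :=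
    (Continuous.intervalIntegrable (by continuity) m d)
  rw [intervalIntegral.integral_eq_sub_of_hasDerivAt h hint]
  simp only [sub_self, mul_zero, Real.exp_zero]
  field_simp
  ring

lemma rpow_int (r m d : ℝ) (hr : 0 < r) (hmd : m ≤ d) :
    ∫ t in m..d, (d - t) ^ r = (d - m) ^ (r + 1) / (r + 1) := by
  have h : ∀ t ∈ Set.uIcc m d, HasDerivAt (fun t => -((d - t) ^ (r + 1)) / (r + 1))
      ((d - t) ^ r) t := by
    intro t _
    have h1 : HasDerivAt (fun t : ℝ => d - t) (-1) t := by
      simpa using (hasDerivAt_id t).const_sub d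
    have h2 : HasDerivAt (fun x : ℝ => x ^ (r + 1)) ((r + 1) * (d - t) ^ r) (d - t) := by
      have := Real.hasDerivAt_rpow_const (p := r + 1) (x := d - t) (Or.inr (by linarith))
      simpa using this
    have h3 := ((h2.comp t h1).neg).div_const (r + 1)
    exact h3.congr_deriv (by field_simp)
  have hcont : Continuous (fun t : ℝ => (d - t) ^ r) := by
    apply Continuous.rpow_const (by continuity)
    intro x; exact Or.inr hr.le
  rw [intervalIntegral.integral_eq_sub_of_hasDerivAt h (hcont.intervalIntegrable m d)]
  rw [sub_self, Real.zero_rpow (by linarith), neg_zero, zero_div]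
  field_simp
  ring

lemma holder_half (φ : ℝ → ℝ) (m d : ℝ) (hmd : m < d)
    (hφ : IntervalIntegrable φ volume m d)
    (p q : ℝ) (hq : 1 < q) (hpq : 1 / p + 1 / q = 1)
    (c C : ℝ) (hc : c ≠ 0) (hC : 0 < C)
    (hbound : ∀ t ∈ Set.Icc m d, |φ t| ^ q ≤ C * Real.exp (c * (d - t))) :
    |∫ t in m..d, (d - t) ^ 3 / 6 * φ t| ≤
      (1 / 6) * ((d - m) ^ (3 * p + 1) / (3 * p + 1)) ^ (1 / p)
        * (C * ((Real.exp (c * (d - m)) - 1) / c)) ^ (1 / q) := by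
  have hq0 : 0 < q := lt_trans one_pos hq
  have h1q : 1 / q < 1 := by rw [div_lt_one hq0]; exact hq
  have h1q0 : 0 < 1 / q := by positivity
  have hp_inv : 0 < 1 / p := by linarith
  have hp0 : 0 < p := by
    by_contra h
    push_neg at h
    have : 1 / p ≤ 0 := div_nonpos_of_nonneg_of_nonpos zero_le_one h
    linarith
  have hp1 : 1 < p := by
    have : 1 / p < 1 := by linarith
    rw [div_lt_one hp0] at this; exact this
  have hconj : Real.HolderConjugate p q := Real.holderConjugate_iff.2 ⟨hp1, by rw [← one_div, ← one_div]; exact hpq⟩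
  set μ := volume.restrict (Set.Ioc m d) with hμ
  haveI : IsFiniteMeasure μ := by
    constructor
    rw [hμ, Measure.restrict_apply_univ]
    exact measure_Ioc_lt_top
  -- the bound on |φ| : pointwise
  have hE0 : ∀ t ∈ Set.Icc m d, Real.exp (c * (d - t)) ≤ Real.exp (|c| * (d - m)) := by
    intro t ht
    apply Real.exp_le_exp.2
    calc c * (d - t) ≤ |c * (d - t)| := le_abs_self _
    _ = |c| * |d - t| := abs_mul _ _
    _ ≤ |c| * (d - m) := by
        apply mul_le_mul_of_nonneg_left _ (abs_nonneg c)
        rw [abs_of_nonneg (by linarith [ht.2])]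
        linarith [ht.1]
  have hφbd : ∀ t ∈ Set.Icc m d, |φ t| ≤ (C * Real.exp (|c| * (d - m))) ^ (1 / q) := by
    intro t ht
    have h1 : |φ t| ^ q ≤ C * Real.exp (|c| * (d - m)) :=
      le_trans (hbound t ht) (mul_le_mul_of_nonneg_left (hE0 t ht) hC.le)
    have h2 : (|φ t| ^ q) ^ (1 / q) ≤ (C * Real.exp (|c| * (d - m))) ^ (1 / q) :=
      Real.rpow_le_rpow (by positivity) h1 h1q0.le
    rwa [← Real.rpow_mul (abs_nonneg _), mul_one_div, div_self hq0.ne', Real.rpow_one] at h2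
  set Mb : ℝ := (C * Real.exp (|c| * (d - m))) ^ (1 / q) with hMb
  have hMb0 : 0 < Mb := by positivity
  -- Step A
  have hA1 : |∫ t in m..d, (d - t) ^ 3 / 6 * φ t| ≤ ∫ t in m..d, (d - t) ^ 3 / 6 * |φ t| := by
    refine le_trans (intervalIntegral.abs_integral_le_integral_abs hmd.le) (le_of_eq ?_)
    rw [intervalIntegral.integral_of_le hmd.le, intervalIntegral.integral_of_le hmd.le]
    apply setIntegral_congr_fun measurableSet_Ioc
    intro t ht
    have h0 : (0:ℝ) ≤ d - t := by linarith [ht.2]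
    simp only [abs_mul]
    rw [abs_of_nonneg (by positivity)]
  -- aesm facts
  have haesφ : AEStronglyMeasurable φ μ := hφ.1.aestronglyMeasurable
  have haesabs : AEStronglyMeasurable (fun t => |φ t|) μ := haesφ.norm
  have haesq : AEStronglyMeasurable (fun t => |φ t| ^ q) μ :=
    (Real.continuous_rpow_const hq0.le).comp_aestronglyMeasurable haesabs
  -- Memℒp
  have hmemg : MemLp (fun t => (d - t) ^ 3 / 6) (ENNReal.ofReal p) μ := by
    apply MemLp.of_bound (Continuous.aestronglyMeasurable (by continuity)) ((d - m) ^ 3 / 6)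
    rw [hμ, ae_restrict_iff' measurableSet_Ioc]
    apply ae_of_all
    intro t ht
    have h0 : (0:ℝ) ≤ d - t := by linarith [ht.2]
    rw [Real.norm_eq_abs, abs_of_nonneg (by positivity)]
    gcongr <;> linarith [ht.1, ht.2]
  have hmemφ : MemLp (fun t => |φ t|) (ENNReal.ofReal q) μ := by
    apply MemLp.of_bound haesabs Mb
    rw [hμ, ae_restrict_iff' measurableSet_Ioc]
    apply ae_of_all
    intro t ht
    rw [Real.norm_eq_abs, abs_abs]
    exact hφbd t (Set.Ioc_subset_Icc_self ht)
  have holder : ∫ t, (d - t) ^ 3 / 6 * |φ t| ∂μ ≤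
      (∫ t, ((d - t) ^ 3 / 6) ^ p ∂μ) ^ (1 / p) * (∫ t, |φ t| ^ q ∂μ) ^ (1 / q) := by
    apply MeasureTheory.integral_mul_le_Lp_mul_Lq_of_nonneg hconj _ _ hmemg hmemφ
    · filter_upwards [ae_restrict_mem measurableSet_Ioc] with t ht
      have h0 : (0:ℝ) ≤ d - t := by linarith [ht.2]
      positivity
    · apply ae_of_all
      intro t
      positivity
  -- Step C : kernel integral
  have hCval : ∫ t, ((d - t) ^ 3 / 6) ^ p ∂μ = (d - m) ^ (3 * p + 1) / (3 * p + 1) / 6 ^ p := by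
    rw [hμ]
    have h1 : ∫ t in Set.Ioc m d, ((d - t) ^ 3 / 6 : ℝ) ^ p
        = ∫ t in Set.Ioc m d, (d - t) ^ (3 * p) / 6 ^ p := by
      apply setIntegral_congr_fun measurableSet_Ioc
      intro t ht
      have h0 : (0:ℝ) ≤ d - t := by linarith [ht.2]
      simp only
      rw [Real.div_rpow (by positivity) (by norm_num), ← Real.rpow_natCast (d - t) 3,
        ← Real.rpow_mul h0]
      norm_num [mul_comm]
    rw [h1, ← intervalIntegral.integral_of_le hmd.le, intervalIntegral.integral_div,
      rpow_int (3 * p) m d (by positivity) hmd.le]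
  have hdm0 : (0:ℝ) ≤ d - m := by linarith
  have hXpos : (0:ℝ) ≤ (d - m) ^ (3 * p + 1) / (3 * p + 1) := by positivity
  have hCval' : (∫ t, ((d - t) ^ 3 / 6) ^ p ∂μ) ^ (1 / p)
      = (1 / 6) * ((d - m) ^ (3 * p + 1) / (3 * p + 1)) ^ (1 / p) := by
    rw [hCval, Real.div_rpow hXpos (by positivity), ← Real.rpow_mul (by norm_num : (0:ℝ) ≤ 6),
      mul_one_div, div_self hp0.ne', Real.rpow_one]
    ring
  -- Step D : the q integral bound
  have hDint : ∫ t in Set.Ioc m d, C * Real.exp (c * (d - t))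
      = C * ((Real.exp (c * (d - m)) - 1) / c) := by
    rw [← intervalIntegral.integral_of_le hmd.le, intervalIntegral.integral_const_mul,
      exp_int c m d hc]
  have hintq : Integrable (fun t => |φ t| ^ q) μ := by
    apply Integrable.mono' (integrable_const (C * Real.exp (|c| * (d - m)))) haesq
    rw [hμ, ae_restrict_iff' measurableSet_Ioc]
    apply ae_of_all
    intro t ht
    rw [Real.norm_eq_abs, abs_of_nonneg (by positivity)]
    exact le_trans (hbound t (Set.Ioc_subset_Icc_self ht))
      (mul_le_mul_of_nonneg_left (hE0 t (Set.Ioc_subset_Icc_self ht)) hC.le)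
  have hDmono : ∫ t, |φ t| ^ q ∂μ ≤ C * ((Real.exp (c * (d - m)) - 1) / c) := by
    rw [← hDint, hμ]
    apply setIntegral_mono_on (by rw [hμ] at hintq; exact hintq)
      (((continuous_const.mul (Real.continuous_exp.comp
        (continuous_const.mul (continuous_const.sub continuous_id))))).integrableOn_Ioc)
      measurableSet_Ioc
    intro t ht
    exact hbound t (Set.Ioc_subset_Icc_self ht)
  have hq_nonneg : 0 ≤ ∫ t, |φ t| ^ q ∂μ := by
    apply MeasureTheory.integral_nonneg; intro t; positivity
  have hDfin : (∫ t, |φ t| ^ q ∂μ) ^ (1 / q)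
      ≤ (C * ((Real.exp (c * (d - m)) - 1) / c)) ^ (1 / q) :=
    Real.rpow_le_rpow hq_nonneg hDmono h1q0.le
  calc |∫ t in m..d, (d - t) ^ 3 / 6 * φ t|
      ≤ ∫ t in m..d, (d - t) ^ 3 / 6 * |φ t| := hA1
    _ = ∫ t, (d - t) ^ 3 / 6 * |φ t| ∂μ := by
        rw [hμ, ← intervalIntegral.integral_of_le hmd.le]
    _ ≤ (∫ t, ((d - t) ^ 3 / 6) ^ p ∂μ) ^ (1 / p) * (∫ t, |φ t| ^ q ∂μ) ^ (1 / q) := holder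
    _ ≤ (∫ t, ((d - t) ^ 3 / 6) ^ p ∂μ) ^ (1 / p)
        * (C * ((Real.exp (c * (d - m)) - 1) / c)) ^ (1 / q) := by
        apply mul_le_mul_of_nonneg_left hDfin
        apply Real.rpow_nonneg
        apply MeasureTheory.integral_nonneg_of_ae
        filter_upwards [ae_restrict_mem measurableSet_Ioc] with t ht
        have h0 : (0:ℝ) ≤ d - t := by linarith [ht.2]
        positivity
    _ = (1 / 6) * ((d - m) ^ (3 * p + 1) / (3 * p + 1)) ^ (1 / p)
        * (C * ((Real.exp (c * (d - m)) - 1) / c)) ^ (1 / q) := by rw [hCval']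

lemma kernel3_deriv (b : ℝ) (t : ℝ) :
    HasDerivAt (fun t => (b - t) ^ 3 / 6) (-((b - t) ^ 2 / 2)) t := by
  have h := (((hasDerivAt_id t).const_sub b).pow 3).div_const 6
  exact h.congr_deriv (by simp only [id_eq]; ring)

lemma kernel2_deriv (b : ℝ) (t : ℝ) :
    HasDerivAt (fun t => (b - t) ^ 2 / 2) (-(b - t)) t := by
  have h := (((hasDerivAt_id t).const_sub b).pow 2).div_const 2
  exact h.congr_deriv (by simp only [id_eq]; ring)

lemma kernel1_deriv (b : ℝ) (t : ℝ) :
    HasDerivAt (fun t : ℝ => b - t) (-1) t := by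
  simpa using (hasDerivAt_id t).const_sub b

lemma kernel3_deriv' (a : ℝ) (t : ℝ) :
    HasDerivAt (fun t => (t - a) ^ 3 / 6) ((t - a) ^ 2 / 2) t := by
  have h := (((hasDerivAt_id t).sub_const a).pow 3).div_const 6
  exact h.congr_deriv (by simp only [id_eq]; ring)

lemma kernel2_deriv' (a : ℝ) (t : ℝ) :
    HasDerivAt (fun t => (t - a) ^ 2 / 2) (t - a) t := by
  have h := (((hasDerivAt_id t).sub_const a).pow 2).div_const 2
  exact h.congr_deriv (by simp only [id_eq]; ring)

lemma kernel1_deriv' (a : ℝ) (t : ℝ) :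
    HasDerivAt (fun t : ℝ => t - a) 1 t := by
  simpa using (hasDerivAt_id t).sub_const a

lemma ibp_identity (f f' f'' f''' : ℝ → ℝ) (a b : ℝ) (hab : a < b)
    (hf' : ∀ x ∈ Set.Icc a b, HasDerivAt f (f' x) x)
    (hf'' : ∀ x ∈ Set.Icc a b, HasDerivAt f' (f'' x) x)
    (hf''' : ∀ x ∈ Set.Icc a b, HasDerivAt f'' (f''' x) x)
    (hint : IntegrableOn f''' (Set.Icc a b)) :
    (∫ t in ((a + b) / 2)..b, (b - t) ^ 3 / 6 * f''' t)
      - ∫ t in a..((a + b) / 2), (t - a) ^ 3 / 6 * f''' t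
    = (∫ x in a..b, f x) - (b - a) * f ((a + b) / 2)
        - ((b - a) ^ 3 / 24) * f'' ((a + b) / 2) := by
  set m := (a + b) / 2 with hm
  have ham : a ≤ m := by rw [hm]; linarith
  have hmb : m ≤ b := by rw [hm]; linarith
  have hmIcc : Set.Icc m b ⊆ Set.Icc a b := Set.Icc_subset_Icc ham le_rfl
  have hmIcc' : Set.Icc a m ⊆ Set.Icc a b := Set.Icc_subset_Icc le_rfl hmb
  have hcf : ContinuousOn f (Set.Icc a b) := fun x hx =>
    (hf' x hx).continuousAt.continuousWithinAt
  have hcf' : ContinuousOn f' (Set.Icc a b) := fun x hx =>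
    (hf'' x hx).continuousAt.continuousWithinAt
  have hcf'' : ContinuousOn f'' (Set.Icc a b) := fun x hx =>
    (hf''' x hx).continuousAt.continuousWithinAt
  have hif_r : IntervalIntegrable f volume m b :=
    (hcf.mono hmIcc).intervalIntegrable_of_Icc hmb
  have hif'_r : IntervalIntegrable f' volume m b :=
    (hcf'.mono hmIcc).intervalIntegrable_of_Icc hmb
  have hif''_r : IntervalIntegrable f'' volume m b :=
    (hcf''.mono hmIcc).intervalIntegrable_of_Icc hmb
  have hif'''_r : IntervalIntegrable f''' volume m b := by
    rw [intervalIntegrable_iff_integrableOn_Icc_of_le hmb]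
    exact hint.mono_set hmIcc
  have hif_l : IntervalIntegrable f volume a m :=
    (hcf.mono hmIcc').intervalIntegrable_of_Icc ham
  have hif'_l : IntervalIntegrable f' volume a m :=
    (hcf'.mono hmIcc').intervalIntegrable_of_Icc ham
  have hif''_l : IntervalIntegrable f'' volume a m :=
    (hcf''.mono hmIcc').intervalIntegrable_of_Icc ham
  have hif'''_l : IntervalIntegrable f''' volume a m := by
    rw [intervalIntegrable_iff_integrableOn_Icc_of_le ham]
    exact hint.mono_set hmIcc'
  have huIcc_r : Set.uIcc m b = Set.Icc m b := Set.uIcc_of_le hmb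
  have huIcc_l : Set.uIcc a m = Set.Icc a m := Set.uIcc_of_le ham
  have hk3r : IntervalIntegrable (fun t => -((b - t) ^ 2 / 2)) volume m b :=
    Continuous.intervalIntegrable (by fun_prop) m b
  have hk2r : IntervalIntegrable (fun t => -(b - t)) volume m b :=
    Continuous.intervalIntegrable (by fun_prop) m b
  have hk1r : IntervalIntegrable (fun _ : ℝ => (-1 : ℝ)) volume m b :=
    Continuous.intervalIntegrable (by fun_prop) m b
  have hk3l : IntervalIntegrable (fun t => (t - a) ^ 2 / 2) volume a m :=
    Continuous.intervalIntegrable (by fun_prop) a m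
  have hk2l : IntervalIntegrable (fun t => t - a) volume a m :=
    Continuous.intervalIntegrable (by fun_prop) a m
  have hk1l : IntervalIntegrable (fun _ : ℝ => (1 : ℝ)) volume a m :=
    Continuous.intervalIntegrable (by fun_prop) a m
  have R1 : ∫ t in m..b, (b - t) ^ 3 / 6 * f''' t
      = -((b - m) ^ 3 / 6 * f'' m) + ∫ t in m..b, (b - t) ^ 2 / 2 * f'' t := by
    rw [intervalIntegral.integral_mul_deriv_eq_deriv_mul
      (fun x _ => kernel3_deriv b x)
      (fun x hx => hf''' x (hmIcc (huIcc_r ▸ hx))) hk3r hif'''_r]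
    simp only [neg_mul, intervalIntegral.integral_neg, sub_self]
    ring_nf
  have R2 : ∫ t in m..b, (b - t) ^ 2 / 2 * f'' t
      = -((b - m) ^ 2 / 2 * f' m) + ∫ t in m..b, (b - t) * f' t := by
    rw [intervalIntegral.integral_mul_deriv_eq_deriv_mul
      (fun x _ => kernel2_deriv b x)
      (fun x hx => hf'' x (hmIcc (huIcc_r ▸ hx))) hk2r hif''_r]
    simp only [neg_mul, intervalIntegral.integral_neg, sub_self]
    ring_nf
  have R3 : ∫ t in m..b, (b - t) * f' t
      = -((b - m) * f m) + ∫ t in m..b, f t := by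
    rw [intervalIntegral.integral_mul_deriv_eq_deriv_mul
      (fun x _ => kernel1_deriv b x)
      (fun x hx => hf' x (hmIcc (huIcc_r ▸ hx))) hk1r hif'_r]
    simp only [neg_mul, one_mul, intervalIntegral.integral_neg, sub_self]
    ring_nf
  have L1 : ∫ t in a..m, (t - a) ^ 3 / 6 * f''' t
      = (m - a) ^ 3 / 6 * f'' m - ∫ t in a..m, (t - a) ^ 2 / 2 * f'' t := by
    rw [intervalIntegral.integral_mul_deriv_eq_deriv_mul
      (fun x _ => kernel3_deriv' a x)
      (fun x hx => hf''' x (hmIcc' (huIcc_l ▸ hx))) hk3l hif'''_l]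
    simp
  have L2 : ∫ t in a..m, (t - a) ^ 2 / 2 * f'' t
      = (m - a) ^ 2 / 2 * f' m - ∫ t in a..m, (t - a) * f' t := by
    rw [intervalIntegral.integral_mul_deriv_eq_deriv_mul
      (fun x _ => kernel2_deriv' a x)
      (fun x hx => hf'' x (hmIcc' (huIcc_l ▸ hx))) hk2l hif''_l]
    simp
  have L3 : ∫ t in a..m, (t - a) * f' t
      = (m - a) * f m - ∫ t in a..m, f t := by
    rw [intervalIntegral.integral_mul_deriv_eq_deriv_mul
      (fun x _ => kernel1_deriv' a x)
      (fun x hx => hf' x (hmIcc' (huIcc_l ▸ hx))) hk1l hif'_l]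
    simp
  have hsplit : (∫ x in a..m, f x) + ∫ x in m..b, f x = ∫ x in a..b, f x :=
    intervalIntegral.integral_add_adjacent_intervals hif_l hif_r
  rw [R1, R2, R3, L1, L2, L3, ← hsplit, hm]
  ring

lemma logconv_bound (g : ℝ → ℝ) (a b q : ℝ) (hab : a < b)
    (hA : 0 < |g a|) (hB : 0 < |g b|)
    (hlog : ∀ x ∈ Set.Icc a b, ∀ y ∈ Set.Icc a b, ∀ α ∈ Set.Icc (0:ℝ) 1,
      |g (α * x + (1 - α) * y)| ^ q ≤ (|g x| ^ q) ^ α * (|g y| ^ q) ^ (1 - α)) :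
    ∀ t ∈ Set.Icc a b, |g t| ^ q ≤ |g b| ^ q
      * Real.exp ((q * Real.log (|g a| / |g b|) / (b - a)) * (b - t)) := by
  intro t ht
  have hba : (0:ℝ) < b - a := by linarith
  set α := (b - t) / (b - a) with hα
  have hα0 : 0 ≤ α := div_nonneg (by linarith [ht.2]) hba.le
  have hα1 : α ≤ 1 := by rw [hα, div_le_one hba]; linarith [ht.1]
  have hpt : α * a + (1 - α) * b = t := by rw [hα]; field_simp; ring
  have h0 := hlog a (Set.left_mem_Icc.2 hab.le) b (Set.right_mem_Icc.2 hab.le) α ⟨hα0, hα1⟩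
  rw [hpt] at h0
  refine h0.trans (le_of_eq ?_)
  rw [Real.rpow_def_of_pos hA, Real.rpow_def_of_pos hB, ← Real.exp_mul, ← Real.exp_mul,
    ← Real.exp_add, ← Real.exp_add]
  congr 1
  rw [Real.log_div hA.ne' hB.ne', hα]
  field_simp
  ring

lemma logconv_bound' (g : ℝ → ℝ) (a b q : ℝ) (hab : a < b)
    (hA : 0 < |g a|) (hB : 0 < |g b|)
    (hlog : ∀ x ∈ Set.Icc a b, ∀ y ∈ Set.Icc a b, ∀ α ∈ Set.Icc (0:ℝ) 1,
      |g (α * x + (1 - α) * y)| ^ q ≤ (|g x| ^ q) ^ α * (|g y| ^ q) ^ (1 - α)) :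
    ∀ t ∈ Set.Icc a b, |g t| ^ q ≤ |g a| ^ q
      * Real.exp ((q * Real.log (|g b| / |g a|) / (b - a)) * (t - a)) := by
  intro t ht
  have hba : (0:ℝ) < b - a := by linarith
  set α := (b - t) / (b - a) with hα
  have hα0 : 0 ≤ α := div_nonneg (by linarith [ht.2]) hba.le
  have hα1 : α ≤ 1 := by rw [hα, div_le_one hba]; linarith [ht.1]
  have hpt : α * a + (1 - α) * b = t := by rw [hα]; field_simp; ring
  have h0 := hlog a (Set.left_mem_Icc.2 hab.le) b (Set.right_mem_Icc.2 hab.le) α ⟨hα0, hα1⟩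
  rw [hpt] at h0
  refine h0.trans (le_of_eq ?_)
  rw [Real.rpow_def_of_pos hA, Real.rpow_def_of_pos hB, ← Real.exp_mul, ← Real.exp_mul,
    ← Real.exp_add, ← Real.exp_add]
  congr 1
  rw [Real.log_div hB.ne' hA.ne', hα]
  field_simp
  ring

lemma Y_pos (K q : ℝ) (hK : 0 < K) (hK1 : K ≠ 1) (hq : 0 < q) :
    0 < 2 / (q * Real.log K) * (K ^ (q / 2) - 1) := by
  rcases lt_or_gt_of_ne hK1 with h | h
  · have hlog : Real.log K < 0 := Real.log_neg hK h
    have hr : K ^ (q / 2) < 1 := Real.rpow_lt_one hK.le h (by positivity)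
    have h1 : 2 / (q * Real.log K) < 0 :=
      div_neg_of_pos_of_neg (by norm_num) (by nlinarith)
    nlinarith
  · have hlog : 0 < Real.log K := Real.log_pos h
    have hr : 1 < K ^ (q / 2) :=
      (Real.one_lt_rpow_iff_of_pos hK).2 (Or.inl ⟨h, by positivity⟩)
    have h1 : 0 < 2 / (q * Real.log K) := by positivity
    nlinarith


theorem thm_2_2
    (I : Set ℝ) (hI : I.OrdConnected)
    (f f' f'' f''' : ℝ → ℝ)
    (hfpos : ∀ x ∈ I, 0 ≤ f x)
    (a b : ℝ) (ha : a ∈ interior I) (hb : b ∈ interior I) (hab : a < b)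
    (hf' : ∀ x ∈ interior I, HasDerivAt f (f' x) x)
    (hf'' : ∀ x ∈ interior I, HasDerivAt f' (f'' x) x)
    (hf''' : ∀ x ∈ interior I, HasDerivAt f'' (f''' x) x)
    (hint : IntegrableOn f''' (Set.Icc a b))
    (p q : ℝ) (hq : 1 < q) (hpq : 1 / p + 1 / q = 1)
    (hlog : ∀ x ∈ Set.Icc a b, ∀ y ∈ Set.Icc a b, ∀ α ∈ Set.Icc (0:ℝ) 1,
      |f''' (α * x + (1 - α) * y)| ^ q ≤ (|f''' x| ^ q) ^ α * (|f''' y| ^ q) ^ (1 - α))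
    (hA : 0 < |f''' a|) (hB : 0 < |f''' b|) (hne : |f''' a| ≠ |f''' b|) :
    |(1 / (b - a)) * ∫ x in a..b, f x - f ((a + b) / 2)
        - ((b - a) ^ 2 / 24) * f'' ((a + b) / 2)|
    ≤ ((b - a) ^ 3 / 96) * (1 / (3 * p + 1)) ^ (1 / p) *
        (|f''' b| * ((2 / (q * Real.log (|f''' a| / |f''' b|))) *
            ((|f''' a| / |f''' b|) ^ (q / 2) - 1)) ^ (1 / q)
          + |f''' a| * ((2 / (q * Real.log (|f''' b| / |f''' a|))) *
            ((|f''' b| / |f''' a|) ^ (q / 2) - 1)) ^ (1 / q)) := by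
  have hq0 : 0 < q := lt_trans one_pos hq
  have hqne : q ≠ 0 := hq0.ne'
  have h1q : 1 / q < 1 := by rw [div_lt_one hq0]; exact hq
  have h1q0 : 0 < 1 / q := by positivity
  have hp_inv : 0 < 1 / p := by linarith
  have hp0 : 0 < p := by
    by_contra h
    push_neg at h
    have : 1 / p ≤ 0 := div_nonpos_of_nonneg_of_nonpos zero_le_one h
    linarith
  have hp1 : 1 < p := by
    have : 1 / p < 1 := by linarith
    rw [div_lt_one hp0] at this; exact this
  have h3p1 : 0 < 3 * p + 1 := by linarith
  have hba : (0:ℝ) < b - a := by linarith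
  have hbane : b - a ≠ 0 := hba.ne'
  have hsub : Set.Icc a b ⊆ interior I := (hI.interior).out ha hb
  set m := (a + b) / 2 with hm
  have ham : a ≤ m := by rw [hm]; linarith
  have hmb : m ≤ b := by rw [hm]; linarith
  have hamlt : a < m := by rw [hm]; linarith
  have hmblt : m < b := by rw [hm]; linarith
  have hbm : b - m = (b - a) / 2 := by rw [hm]; ring
  have hma : m - a = (b - a) / 2 := by rw [hm]; ring
  have hmIcc : Set.Icc m b ⊆ Set.Icc a b := Set.Icc_subset_Icc ham le_rfl
  have hmIcc' : Set.Icc a m ⊆ Set.Icc a b := Set.Icc_subset_Icc le_rfl hmb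
  -- the identity
  have hid := ibp_identity f f' f'' f''' a b hab
    (fun x hx => hf' x (hsub hx)) (fun x hx => hf'' x (hsub hx))
    (fun x hx => hf''' x (hsub hx)) hint
  rw [← hm] at hid
  set A := |f''' a| with hAdef
  set B := |f''' b| with hBdef
  set c1 := q * Real.log (A / B) / (b - a) with hc1
  set c2 := q * Real.log (B / A) / (b - a) with hc2
  have hKpos : 0 < A / B := div_pos hA hB
  have hMpos : 0 < B / A := div_pos hB hA
  have hKne1 : A / B ≠ 1 := fun h => hne (by field_simp at h; exact h)
  have hMne1 : B / A ≠ 1 := fun h => hne (by field_simp at h; exact h.symm)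
  have hlogK : Real.log (A / B) ≠ 0 := Real.log_ne_zero_of_pos_of_ne_one hKpos hKne1
  have hlogM : Real.log (B / A) ≠ 0 := Real.log_ne_zero_of_pos_of_ne_one hMpos hMne1
  have hc1ne : c1 ≠ 0 := by
    rw [hc1]; exact div_ne_zero (mul_ne_zero hqne hlogK) hbane
  have hc2ne : c2 ≠ 0 := by
    rw [hc2]; exact div_ne_zero (mul_ne_zero hqne hlogM) hbane
  have hY1 : 0 < 2 / (q * Real.log (A / B)) * ((A / B) ^ (q / 2) - 1) :=
    Y_pos (A / B) q hKpos hKne1 hq0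
  have hY2 : 0 < 2 / (q * Real.log (B / A)) * ((B / A) ^ (q / 2) - 1) :=
    Y_pos (B / A) q hMpos hMne1 hq0
  -- integrabilities
  have hi3r : IntervalIntegrable f''' volume m b := by
    rw [intervalIntegrable_iff_integrableOn_Icc_of_le hmb]
    exact hint.mono_set hmIcc
  have hi3l : IntervalIntegrable f''' volume a m := by
    rw [intervalIntegrable_iff_integrableOn_Icc_of_le ham]
    exact hint.mono_set hmIcc'
  -- right-half bound
  have hb1 : ∀ t ∈ Set.Icc m b, |f''' t| ^ q ≤ B ^ q * Real.exp (c1 * (b - t)) :=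
    fun t ht => logconv_bound f''' a b q hab hA hB hlog t (hmIcc ht)
  have T1bd := holder_half f''' m b hmblt hi3r p q hq hpq c1 (B ^ q) hc1ne
    (Real.rpow_pos_of_pos hB q) hb1
  -- left-half : reflect
  have hrefl : (∫ t in a..m, (t - a) ^ 3 / 6 * f''' t)
      = ∫ t in a..m, (m - t) ^ 3 / 6 * f''' (a + m - t) := by
    have h := intervalIntegral.integral_comp_sub_left
      (fun x => (x - a) ^ 3 / 6 * f''' x) (a + m) (a := a) (b := m)
    simp only [add_sub_cancel_left, add_sub_cancel_right] at h
    rw [← h]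
    apply intervalIntegral.integral_congr
    intro t _
    simp only
    ring_nf
  have hψint : IntervalIntegrable (fun t => f''' (a + m - t)) volume a m := by
    have h := hi3l.comp_sub_left (a + m)
    simp only [add_sub_cancel_left, add_sub_cancel_right] at h
    exact h.symm
  have hb2 : ∀ t ∈ Set.Icc a m, |f''' (a + m - t)| ^ q
      ≤ A ^ q * Real.exp (c2 * (m - t)) := by
    intro t ht
    have hs : a + m - t ∈ Set.Icc a b :=
      ⟨by linarith [ht.2], by linarith [ht.1, hmb]⟩
    have h := logconv_bound' f''' a b q hab hA hB hlog (a + m - t) hs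
    rw [show a + m - t - a = m - t by ring] at h
    exact h
  have T2bd := holder_half (fun t => f''' (a + m - t)) a m hamlt hψint p q hq hpq c2 (A ^ q)
    hc2ne (Real.rpow_pos_of_pos hA q) hb2
  rw [← hrefl] at T2bd
  -- exp values
  have he1 : Real.exp (c1 * (b - m)) = (A / B) ^ (q / 2) := by
    rw [Real.rpow_def_of_pos hKpos, hc1, hbm]
    congr 1
    field_simp
  have he2 : Real.exp (c2 * (m - a)) = (B / A) ^ (q / 2) := by
    rw [Real.rpow_def_of_pos hMpos, hc2, hma]
    congr 1
    field_simp
  rw [he1, hbm] at T1bd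
  rw [he2, hma] at T2bd
  -- key algebraic identities
  have hhalfpos : (0:ℝ) < (b - a) / 2 := by linarith
  have hpqmul : p + q = p * q := by
    have h := hpq
    field_simp [hp0.ne', hqne] at h
    linarith
  have hsum4 : (3 * p + 1) * (1 / p) + 1 / q = 4 := by
    field_simp [hp0.ne', hqne]
    linarith [hpqmul]
  -- term 1 equality
  have hstep1 : ((A / B) ^ (q / 2) - 1) / c1
      = ((b - a) / 2) * (2 / (q * Real.log (A / B)) * ((A / B) ^ (q / 2) - 1)) := by
    rw [hc1, div_div_eq_mul_div]
    field_simp [hqne, hlogK]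
  have hstep2 : ((B / A) ^ (q / 2) - 1) / c2
      = ((b - a) / 2) * (2 / (q * Real.log (B / A)) * ((B / A) ^ (q / 2) - 1)) := by
    rw [hc2, div_div_eq_mul_div]
    field_simp [hqne, hlogM]
  have hexp4 : ((b - a) / 2) ^ ((3 * p + 1) * (1 / p)) * ((b - a) / 2) ^ (1 / q)
      = ((b - a) / 2) ^ (4:ℕ) := by
    rw [← Real.rpow_add hhalfpos, hsum4, show ((4:ℝ)) = ((4:ℕ):ℝ) by norm_num,
      Real.rpow_natCast]
  have key1 : (1 / 6) * (((b - a) / 2) ^ (3 * p + 1) / (3 * p + 1)) ^ (1 / p)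
      * (B ^ q * (((A / B) ^ (q / 2) - 1) / c1)) ^ (1 / q)
      = ((b - a) ^ 4 / 96) * (1 / (3 * p + 1)) ^ (1 / p)
        * (B * (2 / (q * Real.log (A / B)) * ((A / B) ^ (q / 2) - 1)) ^ (1 / q)) := by
    rw [hstep1, Real.mul_rpow (Real.rpow_nonneg hB.le q) (by positivity),
      Real.mul_rpow hhalfpos.le hY1.le,
      ← Real.rpow_mul hB.le, mul_one_div, div_self hqne, Real.rpow_one,
      div_eq_mul_one_div (((b - a) / 2) ^ (3 * p + 1)) (3 * p + 1),
      Real.mul_rpow (Real.rpow_nonneg hhalfpos.le _) (by positivity),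
      ← Real.rpow_mul hhalfpos.le]
    linear_combination (1 / 6 * (1 / (3 * p + 1)) ^ (1 / p) * B
      * (2 / (q * Real.log (A / B)) * ((A / B) ^ (q / 2) - 1)) ^ (1 / q)) * hexp4
  have key2 : (1 / 6) * (((b - a) / 2) ^ (3 * p + 1) / (3 * p + 1)) ^ (1 / p)
      * (A ^ q * (((B / A) ^ (q / 2) - 1) / c2)) ^ (1 / q)
      = ((b - a) ^ 4 / 96) * (1 / (3 * p + 1)) ^ (1 / p)
        * (A * (2 / (q * Real.log (B / A)) * ((B / A) ^ (q / 2) - 1)) ^ (1 / q)) := by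
    rw [hstep2, Real.mul_rpow (Real.rpow_nonneg hA.le q) (by positivity),
      Real.mul_rpow hhalfpos.le hY2.le,
      ← Real.rpow_mul hA.le, mul_one_div, div_self hqne, Real.rpow_one,
      div_eq_mul_one_div (((b - a) / 2) ^ (3 * p + 1)) (3 * p + 1),
      Real.mul_rpow (Real.rpow_nonneg hhalfpos.le _) (by positivity),
      ← Real.rpow_mul hhalfpos.le]
    linear_combination (1 / 6 * (1 / (3 * p + 1)) ^ (1 / p) * A
      * (2 / (q * Real.log (B / A)) * ((B / A) ^ (q / 2) - 1)) ^ (1 / q)) * hexp4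
  rw [key1] at T1bd
  rw [key2] at T2bd
  -- assemble
  have hcontf : ContinuousOn f (Set.Icc a b) := fun x hx =>
    (hf' x (hsub hx)).continuousAt.continuousWithinAt
  have hintf : IntervalIntegrable f volume a b := hcontf.intervalIntegrable_of_Icc hab.le
  have hconst1 : IntervalIntegrable (fun _ : ℝ => f m) volume a b := intervalIntegrable_const
  have hconst2 : IntervalIntegrable (fun _ : ℝ => (b - a) ^ 2 / 24 * f'' m) volume a b :=
    intervalIntegrable_const
  have hsplit2 : (∫ x in a..b, (f x - f m - (b - a) ^ 2 / 24 * f'' m))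
      = (∫ x in a..b, f x) - (b - a) * f m - (b - a) ^ 3 / 24 * f'' m := by
    rw [intervalIntegral.integral_sub (hintf.sub hconst1) hconst2,
      intervalIntegral.integral_sub hintf hconst1,
      intervalIntegral.integral_const, intervalIntegral.integral_const, smul_eq_mul, smul_eq_mul]
    ring
  have hE : 1 / (b - a) * ∫ x in a..b, (f x - f m - (b - a) ^ 2 / 24 * f'' m)
      = ((∫ t in m..b, (b - t) ^ 3 / 6 * f''' t)
          - ∫ t in a..m, (t - a) ^ 3 / 6 * f''' t) / (b - a) := by
    rw [hsplit2, ← hid]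
    ring
  rw [hE, abs_div, abs_of_pos hba]
  have habs : |(∫ t in m..b, (b - t) ^ 3 / 6 * f''' t)
      - ∫ t in a..m, (t - a) ^ 3 / 6 * f''' t|
      ≤ |∫ t in m..b, (b - t) ^ 3 / 6 * f''' t|
        + |∫ t in a..m, (t - a) ^ 3 / 6 * f''' t| := abs_sub _ _
  calc |(∫ t in m..b, (b - t) ^ 3 / 6 * f''' t)
      - ∫ t in a..m, (t - a) ^ 3 / 6 * f''' t| / (b - a)
      ≤ (|∫ t in m..b, (b - t) ^ 3 / 6 * f''' t|
        + |∫ t in a..m, (t - a) ^ 3 / 6 * f''' t|) / (b - a) := by gcongr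
    _ ≤ (((b - a) ^ 4 / 96) * (1 / (3 * p + 1)) ^ (1 / p)
          * (B * (2 / (q * Real.log (A / B)) * ((A / B) ^ (q / 2) - 1)) ^ (1 / q))
        + ((b - a) ^ 4 / 96) * (1 / (3 * p + 1)) ^ (1 / p)
          * (A * (2 / (q * Real.log (B / A)) * ((B / A) ^ (q / 2) - 1)) ^ (1 / q)))
        / (b - a) := by gcongr
    _ = ((b - a) ^ 3 / 96) * (1 / (3 * p + 1)) ^ (1 / p) *
        (B * (2 / (q * Real.log (A / B)) * ((A / B) ^ (q / 2) - 1)) ^ (1 / q)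
          + A * (2 / (q * Real.log (B / A)) * ((B / A) ^ (q / 2) - 1)) ^ (1 / q)) := by
        field_simp
end

section
/- Let f : I → [0,∞) be three times differentiable on the interior of interval I containing [a,b] with a < b, with f''' integrable on [a,b], and suppose |f'''| is log-convex on [a,b] with |f'''(a)|, |f'''(b)| positive and distinct at every pair of partition points. Let a = x₀ < x₁ < ... < xₙ = b be a partition and M(f,d) = Σ_{i=0}^{n−1} f((x_i + x_{i+1})/2)·(x_{i+1} − x_i). Assume f''((x_i + x_{i+1})/2) = 0 for each i, and |f'''(x_i)|, |f'''(x_{i+1})| are positive and distinct for each i. Then |∫_a^b f(x) dx − M(f,d)| ≤ Σ_{i=0}^{n−1} ((x_{i+1} − x_i)⁴/96)·(|f'''(x_{i+1})|·μ(K_i) + |f'''(x_i)|·μ(M_i)), where K_i = |f'''(x_i)|/|f'''(x_{i+1})|, M_i = |f'''(x_{i+1})|/|f'''(x_i)|, and μ(c) = 2·c^{1/2}·(ln c − 6)/(ln c)² + 48·c^{1/2}·(ln c − 2)/(ln c)⁴ + 96/(ln c)⁴. -/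
open MeasureTheory intervalIntegral

section Aux

lemma mee_anti_left (K c : ℝ) (hK : K ≠ 0) (p q : ℝ) :
    ∫ s in p..q, (s - c)^3 * Real.exp (K*(s-c)) =
      (fun s => Real.exp (K*(s-c)) * ((s-c)^3/K - 3*(s-c)^2/K^2 + 6*(s-c)/K^3 - 6/K^4)) q
      - (fun s => Real.exp (K*(s-c)) * ((s-c)^3/K - 3*(s-c)^2/K^2 + 6*(s-c)/K^3 - 6/K^4)) p := by
  apply intervalIntegral.integral_eq_sub_of_hasDerivAt
  · intro s hs
    have h1 : HasDerivAt (fun s => Real.exp (K*(s-c))) (K * Real.exp (K*(s-c))) s := by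
      have := ((hasDerivAt_id s).sub_const c).const_mul K
      simpa [mul_comm] using (this.exp)
    have h2 : HasDerivAt (fun s => ((s-c)^3/K - 3*(s-c)^2/K^2 + 6*(s-c)/K^3 - 6/K^4))
        (3*(s-c)^2/K - 6*(s-c)/K^2 + 6/K^3) s := by
      have hid := (hasDerivAt_id s).sub_const c
      have := (((hid.pow 3).div_const K).sub (((hid.pow 2).const_mul 3).div_const (K^2))).add
        ((hid.const_mul 6).div_const (K^3))
      have := this.sub_const (6/K^4)
      refine this.congr_deriv ?_
      simp only [id_eq]
      ring
    refine (h1.mul h2).congr_deriv ?_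
    field_simp
    ring
  · exact (Continuous.intervalIntegrable (by continuity) p q)

lemma mee_anti_right (K c d : ℝ) (hK : K ≠ 0) (p q : ℝ) :
    ∫ s in p..q, (d - s)^3 * Real.exp (K*(s-c)) =
      (fun s => Real.exp (K*(s-c)) * ((d-s)^3/K + 3*(d-s)^2/K^2 + 6*(d-s)/K^3 + 6/K^4)) q
      - (fun s => Real.exp (K*(s-c)) * ((d-s)^3/K + 3*(d-s)^2/K^2 + 6*(d-s)/K^3 + 6/K^4)) p := by
  apply intervalIntegral.integral_eq_sub_of_hasDerivAt
  · intro s hs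
    have h1 : HasDerivAt (fun s => Real.exp (K*(s-c))) (K * Real.exp (K*(s-c))) s := by
      have := ((hasDerivAt_id s).sub_const c).const_mul K
      simpa [mul_comm] using (this.exp)
    have h2 : HasDerivAt (fun s => ((d-s)^3/K + 3*(d-s)^2/K^2 + 6*(d-s)/K^3 + 6/K^4))
        (-(3*(d-s)^2/K) - 6*(d-s)/K^2 - 6/K^3) s := by
      have hid : HasDerivAt (fun s : ℝ => d - s) (-1) s := by
        simpa using (hasDerivAt_id s).const_sub d
      have := ((((hid.pow 3).div_const K).add (((hid.pow 2).const_mul 3).div_const (K^2))).add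
        ((hid.const_mul 6).div_const (K^3))).add_const (6/K^4)
      refine this.congr_deriv ?_
      push_cast
      ring
    refine (h1.mul h2).congr_deriv ?_
    field_simp
    ring
  · exact (Continuous.intervalIntegrable (by continuity) p q)

lemma mee_step_left (g g' : ℝ → ℝ) (c0 p q : ℝ) (k : ℕ)
    (hg : ∀ x ∈ Set.uIcc p q, HasDerivAt g (g' x) x)
    (hg' : IntervalIntegrable g' volume p q) :
    ∫ s in p..q, (s - c0)^(k+1) * g' s =
      (q-c0)^(k+1) * g q - (p-c0)^(k+1) * g p
        - (k+1 : ℝ) * ∫ s in p..q, (s-c0)^k * g s := by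
  have hsub : Set.Ioo (min p q) (max p q) ⊆ Set.uIcc p q := Set.Ioo_subset_Icc_self
  have hu : ∀ x ∈ Set.Ioo (min p q) (max p q),
      HasDerivAt (fun s : ℝ => (s - c0)^(k+1)) ((k+1 : ℝ) * (x - c0)^k) x := by
    intro x _
    have := (((hasDerivAt_id x).sub_const c0).pow (k+1))
    refine this.congr_deriv ?_
    push_cast; simp
  have hgc : ContinuousOn g (Set.uIcc p q) := fun x hx => ((hg x hx).continuousAt).continuousWithinAt
  rw [intervalIntegral.integral_mul_deriv_eq_deriv_mul_of_hasDerivAt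
    (Continuous.continuousOn (by continuity)) hgc hu
    (fun x hx => hg x (hsub hx))
    (Continuous.intervalIntegrable (by continuity) p q) hg']
  have : (∫ s in p..q, (k+1 : ℝ) * (s-c0)^k * g s) = (k+1:ℝ) * ∫ s in p..q, (s-c0)^k * g s := by
    rw [← intervalIntegral.integral_const_mul]
    congr 1; ext s; ring
  rw [this]

lemma mee_step_right (g g' : ℝ → ℝ) (d0 p q : ℝ) (k : ℕ)
    (hg : ∀ x ∈ Set.uIcc p q, HasDerivAt g (g' x) x)
    (hg' : IntervalIntegrable g' volume p q) :
    ∫ s in p..q, (d0 - s)^(k+1) * g' s =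
      (d0-q)^(k+1) * g q - (d0-p)^(k+1) * g p
        + (k+1 : ℝ) * ∫ s in p..q, (d0-s)^k * g s := by
  have hsub : Set.Ioo (min p q) (max p q) ⊆ Set.uIcc p q := Set.Ioo_subset_Icc_self
  have hu : ∀ x ∈ Set.Ioo (min p q) (max p q),
      HasDerivAt (fun s : ℝ => (d0 - s)^(k+1)) (-((k+1 : ℝ) * (d0 - x)^k)) x := by
    intro x _
    have := (((hasDerivAt_id x).const_sub d0).pow (k+1))
    refine this.congr_deriv ?_
    have h : ((k:ℝ)+1) * (d0 - x)^k * (-1) = -(((k:ℝ)+1) * (d0-x)^k) := by ring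
    push_cast
    simp only [mul_neg_one, mul_one, id_eq]
  have hgc : ContinuousOn g (Set.uIcc p q) := fun x hx => ((hg x hx).continuousAt).continuousWithinAt
  rw [intervalIntegral.integral_mul_deriv_eq_deriv_mul_of_hasDerivAt
    (Continuous.continuousOn (by continuity)) hgc hu
    (fun x hx => hg x (hsub hx))
    (Continuous.intervalIntegrable (by continuity) p q) hg']
  have : (∫ s in p..q, -((k+1 : ℝ) * (d0-s)^k) * g s) = -((k+1:ℝ) * ∫ s in p..q, (d0-s)^k * g s) := by
    rw [← intervalIntegral.integral_const_mul, ← intervalIntegral.integral_neg]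
    congr 1; ext s; ring
  rw [this]
  ring

lemma mee_midpoint_identity (f f' f'' f''' : ℝ → ℝ) (c d : ℝ) (hcd : c ≤ d)
    (hf : ∀ x ∈ Set.Icc c d, HasDerivAt f (f' x) x)
    (hf' : ∀ x ∈ Set.Icc c d, HasDerivAt f' (f'' x) x)
    (hf'' : ∀ x ∈ Set.Icc c d, HasDerivAt f'' (f''' x) x)
    (hint : IntervalIntegrable f''' volume c d)
    (hm : f'' ((c+d)/2) = 0) :
    (∫ t in c..d, f t) - f ((c+d)/2) * (d - c) =
      (1/6) * ((∫ s in ((c+d)/2)..d, (d-s)^3 * f''' s)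
        - ∫ s in c..((c+d)/2), (s-c)^3 * f''' s) := by
  set m := (c+d)/2 with hmdef
  have hcm : c ≤ m := by simp [hmdef]; linarith
  have hmd : m ≤ d := by simp [hmdef]; linarith
  have hsubR : Set.uIcc m d ⊆ Set.Icc c d := by
    rw [Set.uIcc_of_le hmd]; exact Set.Icc_subset_Icc hcm le_rfl
  have hsubL : Set.uIcc c m ⊆ Set.Icc c d := by
    rw [Set.uIcc_of_le hcm]; exact Set.Icc_subset_Icc le_rfl hmd
  have huIcc : Set.uIcc c d = Set.Icc c d := Set.uIcc_of_le hcd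
  have hfc : ContinuousOn f (Set.Icc c d) := fun y hy => (hf y hy).continuousAt.continuousWithinAt
  have hf'c : ContinuousOn f' (Set.Icc c d) := fun y hy => (hf' y hy).continuousAt.continuousWithinAt
  have hf''c : ContinuousOn f'' (Set.Icc c d) := fun y hy => (hf'' y hy).continuousAt.continuousWithinAt
  have hiR3 : IntervalIntegrable f''' volume m d := hint.mono_set (by rw [huIcc] at *; exact hsubR)
  have hiL3 : IntervalIntegrable f''' volume c m := hint.mono_set (by rw [huIcc] at *; exact hsubL)
  have hiR2 : IntervalIntegrable f'' volume m d := (hf''c.mono hsubR).intervalIntegrable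
  have hiL2 : IntervalIntegrable f'' volume c m := (hf''c.mono hsubL).intervalIntegrable
  have hiR1 : IntervalIntegrable f' volume m d := (hf'c.mono hsubR).intervalIntegrable
  have hiL1 : IntervalIntegrable f' volume c m := (hf'c.mono hsubL).intervalIntegrable
  have hiR0 : IntervalIntegrable f volume m d := (hfc.mono hsubR).intervalIntegrable
  have hiL0 : IntervalIntegrable f volume c m := (hfc.mono hsubL).intervalIntegrable
  have eR3 := mee_step_right f'' f''' d m d 2 (fun y hy => hf'' y (hsubR hy)) hiR3
  have eR2 := mee_step_right f' f'' d m d 1 (fun y hy => hf' y (hsubR hy)) hiR2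
  have eR1 := mee_step_right f f' d m d 0 (fun y hy => hf y (hsubR hy)) hiR1
  have eL3 := mee_step_left f'' f''' c c m 2 (fun y hy => hf'' y (hsubL hy)) hiL3
  have eL2 := mee_step_left f' f'' c c m 1 (fun y hy => hf' y (hsubL hy)) hiL2
  have eL1 := mee_step_left f f' c c m 0 (fun y hy => hf y (hsubL hy)) hiL1
  norm_num at eR3 eR2 eR1 eL3 eL2 eL1
  have hsplit : (∫ t in c..m, f t) + (∫ t in m..d, f t) = ∫ t in c..d, f t :=
    intervalIntegral.integral_add_adjacent_intervals hiL0 hiR0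
  have hdm : d - m = (d - c)/2 := by rw [hmdef]; ring
  have hmc : m - c = (d - c)/2 := by rw [hmdef]; ring
  rw [eR3, eL3, eR2, eL2, eR1, eL1, hm, ← hsplit, hdm, hmc]
  ring

lemma mee_cancel (A E L : ℝ) (hE : E ≠ 0) (hL : L ≠ 0) :
    (A*E^2) * (2 * E⁻¹ * (-L - 6) / (-L)^2 + 48 * E⁻¹ * (-L - 2) / (-L)^4 + 96 / (-L)^4)
    = A * (2*E*(-L-6)/L^2 + 48*E*(-L-2)/L^4 + 96*E^2/L^4) := by
  rw [show ((-L)^2 : ℝ) = L^2 by ring, show ((-L)^4 : ℝ) = L^4 by ring]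
  field_simp

lemma mee_final_algebra (A E L c d K : ℝ) (hL : L ≠ 0) (hcd : c < d) (hK : K = L / (d - c)) :
    (1/6) * (A * (E^2 * ((d-d)^3/K + 3*(d-d)^2/K^2 + 6*(d-d)/K^3 + 6/K^4)
        - E * ((d-(c+d)/2)^3/K + 3*(d-(c+d)/2)^2/K^2 + 6*(d-(c+d)/2)/K^3 + 6/K^4))
      + A * (E * (((c+d)/2-c)^3/K - 3*((c+d)/2-c)^2/K^2 + 6*((c+d)/2-c)/K^3 - 6/K^4)
        - 1 * (((c:ℝ)-c)^3/K - 3*((c:ℝ)-c)^2/K^2 + 6*((c:ℝ)-c)/K^3 - 6/K^4)))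
    = ((d-c)^4/96) * (A * (2*E*(-L-6)/L^2 + 48*E*(-L-2)/L^4 + 96*E^2/L^4)
        + A * (2*E*(L-6)/L^2 + 48*E*(L-2)/L^4 + 96/L^4)) := by
  subst hK
  have hdc : d - c ≠ 0 := by intro h; linarith [sub_pos.mpr hcd, h]
  field_simp
  ring

end Aux
set_option maxHeartbeats 1000000 in
lemma mee_interval_bound (f f' f'' f''' : ℝ → ℝ) (c d : ℝ) (hcd : c < d)
    (hf : ∀ y ∈ Set.Icc c d, HasDerivAt f (f' y) y)
    (hf' : ∀ y ∈ Set.Icc c d, HasDerivAt f' (f'' y) y)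
    (hf'' : ∀ y ∈ Set.Icc c d, HasDerivAt f'' (f''' y) y)
    (hint : IntervalIntegrable f''' volume c d)
    (hm : f'' ((c+d)/2) = 0)
    (hA : 0 < |f''' c|) (hB : 0 < |f''' d|) (hAB : |f''' c| ≠ |f''' d|)
    (hlog : ∀ α ∈ Set.Icc (0:ℝ) 1, |f''' (α*c + (1-α)*d)| ≤ |f''' c| ^ α * |f''' d| ^ (1-α)) :
    |(∫ t in c..d, f t) - f ((c+d)/2) * (d - c)|
      ≤ ((d-c)^4/96) * (|f''' d| * mu (|f''' c| / |f''' d|)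
          + |f''' c| * mu (|f''' d| / |f''' c|)) := by
  set A := |f''' c| with hAdef
  set B := |f''' d| with hBdef
  set L : ℝ := Real.log B - Real.log A with hLdef
  set K : ℝ := L / (d - c) with hKdef
  set E : ℝ := Real.exp (L/2) with hEdef
  set m : ℝ := (c+d)/2 with hmdef
  have hdc : (0:ℝ) < d - c := sub_pos.mpr hcd
  have hL : L ≠ 0 := by
    intro h0
    apply hAB
    have h1 : Real.log A = Real.log B := by rw [hLdef] at h0; linarith [sub_eq_zero.mp h0]
    have h2 := congrArg Real.exp h1
    rwa [Real.exp_log hA, Real.exp_log hB] at h2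
  have hK : K ≠ 0 := div_ne_zero hL hdc.ne'
  have hE : (0:ℝ) < E := Real.exp_pos _
  have hexpL : Real.exp L = B / A := by
    rw [hLdef, Real.exp_sub, Real.exp_log hA, Real.exp_log hB]
  have hE2 : E^2 = B / A := by
    rw [hEdef, sq, ← Real.exp_add, show L/2+L/2 = L by ring, hexpL]
  have hcm : c ≤ m := by rw [hmdef]; linarith
  have hmd : m ≤ d := by rw [hmdef]; linarith
  -- pointwise bound from log-convexity
  have hbound : ∀ s ∈ Set.Icc c d, |f''' s| ≤ A * Real.exp (K * (s - c)) := by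
    intro s hs
    have hα1 : (d - s)/(d - c) ∈ Set.Icc (0:ℝ) 1 := by
      constructor
      · exact div_nonneg (by linarith [hs.2]) hdc.le
      · rw [div_le_one hdc]; linarith [hs.1]
    have h1 := hlog _ hα1
    have heq : (d - s)/(d - c) * c + (1 - (d - s)/(d - c)) * d = s := by
      field_simp
      ring
    rw [heq] at h1
    refine h1.trans_eq ?_
    rw [Real.rpow_def_of_pos hA, Real.rpow_def_of_pos hB, ← Real.exp_add]
    have : A * Real.exp (K * (s - c)) = Real.exp (Real.log A + K * (s - c)) := by
      rw [Real.exp_add, Real.exp_log hA]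
    rw [this]
    congr 1
    rw [hKdef, hLdef]
    field_simp
    ring
  -- integrability pieces
  have hsubR : Set.uIcc m d ⊆ Set.uIcc c d := Set.uIcc_subset_uIcc
    (by rw [Set.uIcc_of_le hcd.le]; exact ⟨hcm, hmd⟩)
    (by rw [Set.uIcc_of_le hcd.le]; exact ⟨hcd.le, le_rfl⟩)
  have hsubL : Set.uIcc c m ⊆ Set.uIcc c d := Set.uIcc_subset_uIcc
    (by rw [Set.uIcc_of_le hcd.le]; exact ⟨le_rfl, hcd.le⟩)
    (by rw [Set.uIcc_of_le hcd.le]; exact ⟨hcm, hmd⟩)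
  have hiR3 : IntervalIntegrable f''' volume m d := hint.mono_set hsubR
  have hiL3 : IntervalIntegrable f''' volume c m := hint.mono_set hsubL
  have hIccR : Set.Icc m d ⊆ Set.Icc c d := Set.Icc_subset_Icc hcm le_rfl
  have hIccL : Set.Icc c m ⊆ Set.Icc c d := Set.Icc_subset_Icc le_rfl hmd
  -- bound for right integral
  have hcontR : ContinuousOn (fun s : ℝ => (d - s)^3) (Set.uIcc m d) :=
    Continuous.continuousOn (by continuity)
  have hcontL : ContinuousOn (fun s : ℝ => (s - c)^3) (Set.uIcc c m) :=
    Continuous.continuousOn (by continuity)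
  have hintR : IntervalIntegrable (fun s => (d - s)^3 * f''' s) volume m d :=
    hiR3.continuousOn_mul hcontR
  have hintL : IntervalIntegrable (fun s => (s - c)^3 * f''' s) volume c m :=
    hiL3.continuousOn_mul hcontL
  have hexpc : Continuous (fun s : ℝ => A * Real.exp (K * (s - c))) :=
    continuous_const.mul (Real.continuous_exp.comp (continuous_const.mul (continuous_id.sub continuous_const)))
  have hφR : IntervalIntegrable (fun s => (d - s)^3 * (A * Real.exp (K * (s - c)))) volume m d :=
    Continuous.intervalIntegrable (((continuous_const.sub continuous_id).pow 3).mul hexpc) m d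
  have hφL : IntervalIntegrable (fun s => (s - c)^3 * (A * Real.exp (K * (s - c)))) volume c m :=
    Continuous.intervalIntegrable (((continuous_id.sub continuous_const).pow 3).mul hexpc) c m
  have hR : |∫ s in m..d, (d-s)^3 * f''' s|
      ≤ ∫ s in m..d, (d-s)^3 * (A * Real.exp (K * (s - c))) := by
    refine (intervalIntegral.abs_integral_le_integral_abs hmd).trans ?_
    refine intervalIntegral.integral_mono_on hmd hintR.abs hφR ?_
    intro s hs
    rw [abs_mul, abs_of_nonneg (pow_nonneg (sub_nonneg.mpr hs.2) 3)]
    exact mul_le_mul_of_nonneg_left (hbound s (hIccR hs)) (pow_nonneg (sub_nonneg.mpr hs.2) 3)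
  have hLb : |∫ s in c..m, (s-c)^3 * f''' s|
      ≤ ∫ s in c..m, (s-c)^3 * (A * Real.exp (K * (s - c))) := by
    refine (intervalIntegral.abs_integral_le_integral_abs hcm).trans ?_
    refine intervalIntegral.integral_mono_on hcm hintL.abs hφL ?_
    intro s hs
    rw [abs_mul, abs_of_nonneg (pow_nonneg (sub_nonneg.mpr hs.1) 3)]
    exact mul_le_mul_of_nonneg_left (hbound s (hIccL hs)) (pow_nonneg (sub_nonneg.mpr hs.1) 3)
  -- evaluate the bounding integrals
  have evR : (∫ s in m..d, (d-s)^3 * (A * Real.exp (K * (s - c))))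
      = A * ((Real.exp (K*(d-c)) * ((d-d)^3/K + 3*(d-d)^2/K^2 + 6*(d-d)/K^3 + 6/K^4))
        - (Real.exp (K*(m-c)) * ((d-m)^3/K + 3*(d-m)^2/K^2 + 6*(d-m)/K^3 + 6/K^4))) := by
    have h1 : (fun s => (d-s)^3 * (A * Real.exp (K * (s - c))))
        = fun s => A * ((d-s)^3 * Real.exp (K*(s-c))) := by funext s; ring
    rw [h1, intervalIntegral.integral_const_mul, mee_anti_right K c d hK m d]
  have evL : (∫ s in c..m, (s-c)^3 * (A * Real.exp (K * (s - c))))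
      = A * ((Real.exp (K*(m-c)) * ((m-c)^3/K - 3*(m-c)^2/K^2 + 6*(m-c)/K^3 - 6/K^4))
        - (Real.exp (K*(c-c)) * ((c-c)^3/K - 3*(c-c)^2/K^2 + 6*(c-c)/K^3 - 6/K^4))) := by
    have h1 : (fun s => (s-c)^3 * (A * Real.exp (K * (s - c))))
        = fun s => A * ((s-c)^3 * Real.exp (K*(s-c))) := by funext s; ring
    rw [h1, intervalIntegral.integral_const_mul, mee_anti_left K c hK c m]
  have hexpdc : Real.exp (K*(d-c)) = E^2 := by
    rw [hKdef, div_mul_cancel₀ _ hdc.ne', hexpL, hE2]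
  have hexpmc : Real.exp (K*(m-c)) = E := by
    have : K * (m - c) = L / 2 := by
      rw [hKdef, hmdef]; field_simp; ring
    rw [this]
  have hexpcc : Real.exp (K*(c-c)) = 1 := by simp
  rw [hexpdc, hexpmc] at evR
  rw [hexpmc, hexpcc] at evL
  -- identity
  have hid := mee_midpoint_identity f f' f'' f''' c d hcd.le hf hf' hf'' hint hm
  rw [hid]
  -- mu rewriting
  have hlogBA : Real.log (B/A) = L := by rw [Real.log_div hB.ne' hA.ne', hLdef]
  have hlogAB : Real.log (A/B) = -L := by rw [Real.log_div hA.ne' hB.ne', hLdef]; ring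
  have hrBA : (B/A) ^ ((1:ℝ)/2) = E := by
    rw [Real.rpow_def_of_pos (div_pos hB hA), hlogBA, hEdef]
    congr 1; ring
  have hrAB : (A/B) ^ ((1:ℝ)/2) = E⁻¹ := by
    rw [Real.rpow_def_of_pos (div_pos hA hB), hlogAB, hEdef, ← Real.exp_neg]
    congr 1; ring
  have hmuBA : mu (B/A) = 2*E*(L-6)/L^2 + 48*E*(L-2)/L^4 + 96/L^4 := by
    rw [mu, hlogBA, hrBA]
  have hBAE : B = A * E^2 := by
    rw [hE2]; field_simp
  have hmuAB : B * mu (A/B) = A * (2*E*(-L-6)/L^2 + 48*E*(-L-2)/L^4 + 96*E^2/L^4) := by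
    rw [mu, hlogAB, hrAB, hBAE]
    exact mee_cancel A E L hE.ne' hL
  rw [hmuBA, hmuAB]
  calc |1/6 * ((∫ s in m..d, (d-s)^3 * f''' s) - ∫ s in c..m, (s-c)^3 * f''' s)|
      ≤ 1/6 * (|∫ s in m..d, (d-s)^3 * f''' s| + |∫ s in c..m, (s-c)^3 * f''' s|) := by
        rw [abs_mul, abs_of_nonneg (by norm_num : (0:ℝ) ≤ 1/6)]
        exact mul_le_mul_of_nonneg_left (abs_sub _ _) (by norm_num)
    _ ≤ 1/6 * ((∫ s in m..d, (d-s)^3 * (A * Real.exp (K * (s - c))))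
          + (∫ s in c..m, (s-c)^3 * (A * Real.exp (K * (s - c))))) := by
        exact mul_le_mul_of_nonneg_left (add_le_add hR hLb) (by norm_num)
    _ = ((d-c)^4/96) * (A * (2*E*(-L-6)/L^2 + 48*E*(-L-2)/L^4 + 96*E^2/L^4)
          + A * (2*E*(L-6)/L^2 + 48*E*(L-2)/L^4 + 96/L^4)) := by
        rw [evR, evL]
        exact mee_final_algebra A E L c d K hL hcd hKdef
theorem midpoint_error_estimate
    (I : Set ℝ) (hI : I.OrdConnected)
    (f f' f'' f''' : ℝ → ℝ)
    (hfpos : ∀ x ∈ I, 0 ≤ f x)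
    (a b : ℝ) (hab : a < b) (hsub : Set.Icc a b ⊆ interior I)
    (hf' : ∀ x ∈ interior I, HasDerivAt f (f' x) x)
    (hf'' : ∀ x ∈ interior I, HasDerivAt f' (f'' x) x)
    (hf''' : ∀ x ∈ interior I, HasDerivAt f'' (f''' x) x)
    (hint : IntegrableOn f''' (Set.Icc a b))
    (hlog : ∀ x ∈ Set.Icc a b, ∀ y ∈ Set.Icc a b, ∀ α ∈ Set.Icc (0:ℝ) 1,
      |f''' (α * x + (1 - α) * y)| ≤ |f''' x| ^ α * |f''' y| ^ (1 - α))
    (n : ℕ) (hn : 0 < n) (x : ℕ → ℝ)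
    (hx0 : x 0 = a) (hxn : x n = b)
    (hmono : ∀ i < n, x i < x (i + 1))
    (hmid : ∀ i < n, f'' ((x i + x (i + 1)) / 2) = 0)
    (hpos : ∀ i ≤ n, 0 < |f''' (x i)|)
    (hne : ∀ i < n, |f''' (x i)| ≠ |f''' (x (i + 1))|) :
    |(∫ t in a..b, f t)
        - ∑ i ∈ Finset.range n, f ((x i + x (i + 1)) / 2) * (x (i + 1) - x i)|
    ≤ ∑ i ∈ Finset.range n, ((x (i + 1) - x i) ^ 4 / 96) *
        (|f''' (x (i + 1))| * mu (|f''' (x i)| / |f''' (x (i + 1))|)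
          + |f''' (x i)| * mu (|f''' (x (i + 1))| / |f''' (x i)|)) := by
  -- monotonicity of the partition
  have hmono2 : ∀ j ≤ n, ∀ i ≤ j, x i ≤ x j := by
    intro j
    induction j with
    | zero => intro _ i hi; interval_cases i; exact le_rfl
    | succ k ih =>
      intro hk i hi
      rcases Nat.lt_succ_iff_lt_or_eq.mp (Nat.lt_succ_of_le hi) with h | h
      · exact (ih (by omega) i (by omega)).trans (hmono k (by omega)).le
      · exact h ▸ le_rfl
  have hmem : ∀ i ≤ n, x i ∈ Set.Icc a b := by
    intro i hi
    exact ⟨hx0 ▸ hmono2 i hi 0 (Nat.zero_le i), hxn ▸ hmono2 n le_rfl i hi⟩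
  have hfc : ContinuousOn f (Set.Icc a b) := fun y hy =>
    ((hf' y (hsub hy)).continuousAt).continuousWithinAt
  have hsubI : ∀ i < n, Set.Icc (x i) (x (i+1)) ⊆ Set.Icc a b := by
    intro i hi
    exact Set.Icc_subset_Icc (hmem i hi.le).1 (hmem (i+1) hi).2
  have hii : ∀ i < n, IntervalIntegrable f volume (x i) (x (i+1))  := by
    intro i hi
    apply ContinuousOn.intervalIntegrable
    rw [Set.uIcc_of_le (hmono i hi).le]
    exact hfc.mono (hsubI i hi)
  have hsplit : ∑ i ∈ Finset.range n, (∫ t in (x i)..(x (i+1)), f t) = ∫ t in a..b, f t := by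
    rw [← hx0, ← hxn]
    exact intervalIntegral.sum_integral_adjacent_intervals (fun i hi => hii i hi)
  rw [← hsplit, ← Finset.sum_sub_distrib]
  refine (Finset.abs_sum_le_sum_abs _ _).trans (Finset.sum_le_sum ?_)
  intro i hi
  rw [Finset.mem_range] at hi
  have hcd := hmono i hi
  have hIccI : Set.Icc (x i) (x (i+1)) ⊆ interior I := (hsubI i hi).trans hsub
  have hfint : IntervalIntegrable f''' volume (x i) (x (i+1)) := by
    rw [intervalIntegrable_iff_integrableOn_Icc_of_le hcd.le]
    exact hint.mono_set (hsubI i hi)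
  have hlogi : ∀ α ∈ Set.Icc (0:ℝ) 1,
      |f''' (α * (x i) + (1-α) * (x (i+1)))| ≤ |f''' (x i)| ^ α * |f''' (x (i+1))| ^ (1-α) :=
    fun α hα => hlog (x i) (hmem i hi.le) (x (i+1)) (hmem (i+1) hi) α hα
  have := mee_interval_bound f f' f'' f''' (x i) (x (i+1)) hcd
    (fun y hy => hf' y (hIccI hy)) (fun y hy => hf'' y (hIccI hy))
    (fun y hy => hf''' y (hIccI hy)) hfint (hmid i hi)
    (hpos i hi.le) (hpos (i+1) hi) (hne i hi) hlogi
  exact this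
end
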